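/- arXiv:1810.11323 — 3 statements merged into one kernel-verified Lean document; each statement's English description precedes it below -/
import Mathlib

section
/- Let m ≥ 2 be an integer, c ∈ ℝ, α > 0, and let p(n) ∈ [0,1] be a sequence. (i) If p(n) ≥ (1+α)·(log n + c)/n for all sufficiently large n, then there exists a constant C > 0 such that the probability that B_m(n, p(n)) admits a 3-directing word of length at most C·n·log n tends to 1 as n → ∞. (ii) If p(n) ≤ (1−α)·(log n + c)/n for all sufficiently large n, then the probability that B_m(n, p(n)) is 3-directable tends to 0 as n → ∞. -/
open Matrix Filter

/-- The 0/1 matrix (over `ℕ`) associated to a Boolean matrix of entries. -/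
def toMat {n : ℕ} (b : Fin n → Fin n → Bool) : Matrix (Fin n) (Fin n) ℕ :=
  Matrix.of fun i j => if b i j then 1 else 0

open Classical in
/-- The probability that the random set `B_m(n, p)` of `m` independent random `n × n`
binary matrices, whose `m · n²` entries are i.i.d. Bernoulli(`p`), satisfies `E`. -/
noncomputable def bernoulliProb (n m : ℕ) (p : ℝ)
    (E : (Fin m → Matrix (Fin n) (Fin n) ℕ) → Prop) : ℝ :=
  ∑ b : Fin m → Fin n → Fin n → Bool,
    if E (fun k => toMat (b k)) then
      ∏ k : Fin m, ∏ i : Fin n, ∏ j : Fin n, (if b k i j then p else 1 - p)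
    else 0

/-- The set `M` admits a 3-directing word of length at most `L`: there is a nonempty word
`w` of length at most `L` whose product has an entrywise positive column. -/
def ThreeDirWithin {n m : ℕ} (M : Fin m → Matrix (Fin n) (Fin n) ℕ) (L : ℝ) : Prop :=
  ∃ w : List (Fin m), w ≠ [] ∧ (w.length : ℝ) ≤ L ∧
    ∃ j, ∀ i, 0 < (w.map M).prod i j

/-- The set `M` is 3-directable: some nonempty product of its elements has an entrywise
positive column. -/
def Is3Directable {n m : ℕ} (M : Fin m → Matrix (Fin n) (Fin n) ℕ) : Prop :=
  ∃ w : List (Fin m), w ≠ [] ∧ ∃ j, ∀ i, 0 < (w.map M).prod i j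

/-! ### Generic finite probability -/

section generic
open Classical in
noncomputable def PW {Ω : Type*} [Fintype Ω] (W : Ω → ℝ) (φ : Ω → Prop) : ℝ :=
  ∑ b : Ω, if φ b then W b else 0

variable {Ω : Type*} [Fintype Ω] {W : Ω → ℝ}

lemma PW_nonneg (hW : ∀ b, 0 ≤ W b) (φ : Ω → Prop) : 0 ≤ PW W φ := by
  classical
  refine Finset.sum_nonneg fun b _ => ?_
  split <;> simp [hW b]

lemma PW_mono (hW : ∀ b, 0 ≤ W b) {φ ψ : Ω → Prop} (h : ∀ b, φ b → ψ b) :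
    PW W φ ≤ PW W ψ := by
  classical
  refine Finset.sum_le_sum fun b _ => ?_
  by_cases hb : φ b
  · simp [hb, h b hb]
  · simp only [hb, if_false]
    split <;> simp [hW b]

lemma PW_congr {φ ψ : Ω → Prop} (h : ∀ b, φ b ↔ ψ b) : PW W φ = PW W ψ := by
  classical
  unfold PW
  congr 1; ext b; rw [iff_iff_eq.mp (h b)]

lemma PW_le_one (hW : ∀ b, 0 ≤ W b) (hs : ∑ b : Ω, W b = 1) (φ : Ω → Prop) :
    PW W φ ≤ 1 := by
  classical
  rw [← hs]
  refine Finset.sum_le_sum fun b _ => ?_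
  split <;> simp [hW b]

lemma PW_true (hs : ∑ b : Ω, W b = 1) : PW W (fun _ => True) = 1 := by
  classical
  unfold PW; simpa using hs

lemma PW_compl (hs : ∑ b : Ω, W b = 1) (φ : Ω → Prop) :
    PW W φ = 1 - PW W (fun b => ¬ φ b) := by
  classical
  have : PW W φ + PW W (fun b => ¬ φ b) = 1 := by
    unfold PW
    rw [← Finset.sum_add_distrib, ← hs]
    refine Finset.sum_congr rfl fun b _ => ?_
    by_cases hb : φ b <;> simp [hb]
  linarith

lemma PW_or (hW : ∀ b, 0 ≤ W b) (φ ψ : Ω → Prop) :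
    PW W (fun b => φ b ∨ ψ b) ≤ PW W φ + PW W ψ := by
  classical
  unfold PW
  rw [← Finset.sum_add_distrib]
  refine Finset.sum_le_sum fun b _ => ?_
  by_cases h1 : φ b <;> by_cases h2 : ψ b <;> simp [h1, h2, hW b] <;> positivity

lemma PW_exists {ι : Type*} [DecidableEq ι] (hW : ∀ b, 0 ≤ W b) (A : Finset ι)
    (φ : ι → Ω → Prop) :
    PW W (fun b => ∃ i ∈ A, φ i b) ≤ ∑ i ∈ A, PW W (φ i) := by
  classical
  unfold PW
  rw [Finset.sum_comm]
  refine Finset.sum_le_sum fun b _ => ?_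
  rcases Classical.em (∃ i ∈ A, φ i b) with h | h
  · rw [if_pos h]
    obtain ⟨i₀, hi₀, hφ⟩ := h
    calc W b = (if φ i₀ b then W b else 0) := by rw [if_pos hφ]
    _ ≤ ∑ i ∈ A, if φ i b then W b else 0 := by
        refine Finset.single_le_sum (f := fun i => if φ i b then W b else 0)
          (fun i _ => ?_) hi₀
        split <;> simp [hW b]
  · rw [if_neg h]
    refine Finset.sum_nonneg fun i _ => ?_
    split <;> simp [hW b]

lemma PW_exists_fintype {ι : Type*} [Fintype ι] (hW : ∀ b, 0 ≤ W b)
    (φ : ι → Ω → Prop) :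
    PW W (fun b => ∃ i, φ i b) ≤ ∑ i : ι, PW W (φ i) := by
  classical
  have := PW_exists (W := W) hW (Finset.univ : Finset ι) φ
  simpa using this

end generic

/-- Sum over a pi type of a product equals product of sums. -/
lemma sum_pi_prod {ι : Type*} [Fintype ι] [DecidableEq ι] {κ : ι → Type*}
    [∀ i, Fintype (κ i)] (g : ∀ i, κ i → ℝ) :
    ∑ b : ∀ i, κ i, ∏ i, g i (b i) = ∏ i, ∑ x : κ i, g i x := by
  classical
  rw [Finset.prod_univ_sum (fun i => (Finset.univ : Finset (κ i))) g,
    Fintype.piFinset_univ]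
/-! ### Bernoulli weights -/

noncomputable def wB (p : ℝ) (x : Bool) : ℝ := if x then p else 1 - p

noncomputable def WR (n : ℕ) (p : ℝ) (r : Fin n → Bool) : ℝ := ∏ j, wB p (r j)

noncomputable def WM (n : ℕ) (p : ℝ) (f : Fin n → Fin n → Bool) : ℝ := ∏ i, WR n p (f i)

noncomputable def WQ (n m : ℕ) (p : ℝ) (b : Fin m → Fin n → Fin n → Bool) : ℝ :=
  ∏ k, WM n p (b k)

variable {n m : ℕ} {p : ℝ}

lemma wB_nonneg (h0 : 0 ≤ p) (h1 : p ≤ 1) (x : Bool) : 0 ≤ wB p x := by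
  cases x <;> simp [wB] <;> linarith

lemma wB_sum : wB p true + wB p false = 1 := by simp [wB]

lemma WR_nonneg (h0 : 0 ≤ p) (h1 : p ≤ 1) (r : Fin n → Bool) : 0 ≤ WR n p r :=
  Finset.prod_nonneg fun j _ => wB_nonneg h0 h1 _

lemma WM_nonneg (h0 : 0 ≤ p) (h1 : p ≤ 1) (f : Fin n → Fin n → Bool) : 0 ≤ WM n p f :=
  Finset.prod_nonneg fun i _ => WR_nonneg h0 h1 _

lemma WQ_nonneg (h0 : 0 ≤ p) (h1 : p ≤ 1) (b : Fin m → Fin n → Fin n → Bool) :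
    0 ≤ WQ n m p b :=
  Finset.prod_nonneg fun k _ => WM_nonneg h0 h1 _

lemma WR_sum : ∑ r : Fin n → Bool, WR n p r = 1 := by
  unfold WR
  rw [sum_pi_prod (fun _ x => wB p x)]
  simp [wB_sum]

lemma WM_sum : ∑ f : Fin n → Fin n → Bool, WM n p f = 1 := by
  unfold WM
  rw [sum_pi_prod (fun _ r => WR n p r)]
  simp [WR_sum]

lemma WQ_sum : ∑ b : Fin m → Fin n → Fin n → Bool, WQ n m p b = 1 := by
  unfold WQ
  rw [sum_pi_prod (fun _ f => WM n p f)]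
  simp [WM_sum]

noncomputable def PrR (n : ℕ) (p : ℝ) (φ : (Fin n → Bool) → Prop) : ℝ := PW (WR n p) φ
noncomputable def PrM (n : ℕ) (p : ℝ) (φ : (Fin n → Fin n → Bool) → Prop) : ℝ :=
  PW (WM n p) φ
noncomputable def PrQ (n m : ℕ) (p : ℝ) (φ : (Fin m → Fin n → Fin n → Bool) → Prop) : ℝ :=
  PW (WQ n m p) φ

lemma bernoulliProb_eq (E : (Fin m → Matrix (Fin n) (Fin n) ℕ) → Prop) :
    bernoulliProb n m p E = PrQ n m p (fun b => E (fun k => toMat (b k))) := by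
  unfold bernoulliProb PrQ PW WQ WM WR wB
  rfl

/-- Factorization over rows. -/
lemma PrM_pi (φ : Fin n → (Fin n → Bool) → Prop) :
    PrM n p (fun f => ∀ i, φ i (f i)) = ∏ i, PrR n p (φ i) := by
  classical
  unfold PrM PrR PW
  have key : ∀ f : Fin n → Fin n → Bool,
      (if (∀ i, φ i (f i)) then WM n p f else 0)
        = ∏ i, (if φ i (f i) then WR n p (f i) else 0) := by
    intro f
    by_cases h : ∀ i, φ i (f i)
    · rw [if_pos h]
      unfold WM
      refine Finset.prod_congr rfl fun i _ => ?_
      rw [if_pos (h i)]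
    · rw [if_neg h]
      push_neg at h
      obtain ⟨i₀, hi₀⟩ := h
      refine (Finset.prod_eq_zero (Finset.mem_univ i₀) ?_).symm
      rw [if_neg hi₀]
  trans (∑ f : Fin n → Fin n → Bool, ∏ i, (if φ i (f i) then WR n p (f i) else 0))
  · refine Finset.sum_congr rfl fun f _ => ?_
    convert key f using 2
  · exact sum_pi_prod (fun i r => if φ i r then WR n p r else 0)

/-- Factorization over the matrices. -/
lemma PrQ_pi (ψ : Fin m → (Fin n → Fin n → Bool) → Prop) :
    PrQ n m p (fun b => ∀ k, ψ k (b k)) = ∏ k, PrM n p (ψ k) := by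
  classical
  unfold PrQ PrM PW
  have key : ∀ b : Fin m → Fin n → Fin n → Bool,
      (if (∀ k, ψ k (b k)) then WQ n m p b else 0)
        = ∏ k, (if ψ k (b k) then WM n p (b k) else 0) := by
    intro b
    by_cases h : ∀ k, ψ k (b k)
    · rw [if_pos h]
      unfold WQ
      refine Finset.prod_congr rfl fun k _ => ?_
      rw [if_pos (h k)]
    · rw [if_neg h]
      push_neg at h
      obtain ⟨k₀, hk₀⟩ := h
      refine (Finset.prod_eq_zero (Finset.mem_univ k₀) ?_).symm
      rw [if_neg hk₀]
  trans (∑ b : Fin m → Fin n → Fin n → Bool, ∏ k, (if ψ k (b k) then WM n p (b k) else 0))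
  · refine Finset.sum_congr rfl fun b _ => ?_
    convert key b using 2
  · exact sum_pi_prod (fun k f => if ψ k f then WM n p f else 0)

/-- Marginal: an event depending on one matrix. -/
lemma PrQ_marginal (h0 : 0 ≤ p) (h1 : p ≤ 1) (k₀ : Fin m)
    (ψ : (Fin n → Fin n → Bool) → Prop) :
    PrQ n m p (fun b => ψ (b k₀)) = PrM n p ψ := by
  classical
  have h := PrQ_pi (n := n) (m := m) (p := p) (fun k f => k = k₀ → ψ f)
  have e1 : PrQ n m p (fun b => ∀ k, k = k₀ → ψ (b k)) = PrQ n m p (fun b => ψ (b k₀)) :=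
    PW_congr fun b => ⟨fun h' => h' k₀ rfl, fun h' k hk => by subst hk; exact h'⟩
  rw [← e1, h]
  have : ∀ k, PrM n p (fun f => k = k₀ → ψ f)
      = if k = k₀ then PrM n p ψ else 1 := by
    intro k
    by_cases hk : k = k₀
    · subst hk
      simp only [if_pos rfl]
      exact PW_congr fun f => by simp
    · rw [if_neg hk]
      have : PrM n p (fun f => k = k₀ → ψ f) = PrM n p (fun _ => True) :=
        PW_congr fun f => by simp [hk]
      rw [this]
      exact PW_true WM_sum
  rw [Finset.prod_congr rfl fun k _ => this k]
  simp

/-- Spec lemma at row level. -/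
lemma PrR_spec (h0 : 0 ≤ p) (h1 : p ≤ 1) (T : Finset (Fin n)) (s : Fin n → Bool) :
    PrR n p (fun r => ∀ j ∈ T, r j = s j) = ∏ j ∈ T, wB p (s j) := by
  classical
  unfold PrR PW
  have : ∀ r : Fin n → Bool,
      (if (∀ j ∈ T, r j = s j) then WR n p r else 0)
        = ∏ j, (if j ∈ T then (if r j = s j then wB p (r j) else 0) else wB p (r j)) := by
    intro r
    by_cases h : ∀ j ∈ T, r j = s j
    · rw [if_pos h]
      unfold WR
      refine Finset.prod_congr rfl fun j _ => ?_
      by_cases hj : j ∈ T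
      · rw [if_pos hj, if_pos (h j hj)]
      · rw [if_neg hj]
    · rw [if_neg h]
      push_neg at h
      obtain ⟨j₀, hj₀, hne⟩ := h
      refine (Finset.prod_eq_zero (Finset.mem_univ j₀) ?_).symm
      rw [if_pos hj₀, if_neg hne]
  trans (∑ r : Fin n → Bool, ∏ j, (if j ∈ T then (if r j = s j then wB p (r j) else 0) else wB p (r j)))
  · refine Finset.sum_congr rfl fun r _ => ?_
    convert this r using 2
  · rw [sum_pi_prod (fun j x => if j ∈ T then (if x = s j then wB p x else 0) else wB p x)]
    have e2 : ∀ j : Fin n, (∑ x : Bool, if j ∈ T then (if x = s j then wB p x else 0) else wB p x)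
        = if j ∈ T then wB p (s j) else 1 := by
      intro j
      by_cases hj : j ∈ T
      · simp only [if_pos hj]
        cases hs : s j <;> simp [Fintype.sum_bool, hs]
      · simp only [if_neg hj]
        rw [Fintype.sum_bool]
        exact wB_sum
    rw [Finset.prod_congr rfl fun j _ => e2 j, Finset.prod_ite_mem, Finset.univ_inter]

/-! ### Specific events -/

/-- The "cut" event: there is a nonempty proper subset closed under out-edges. -/
def Fcut {n : ℕ} (f : Fin n → Fin n → Bool) : Prop :=
  ∃ S : Finset (Fin n), S.Nonempty ∧ S ≠ Finset.univ ∧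
    ∀ u ∈ S, ∀ v, f u v = true → v ∈ S

/-- The good event for part (i). -/
def Egood {n : ℕ} (f : Fin n → Fin n → Bool) : Prop :=
  (∀ i, ∃ j, f i j = true) ∧ (∃ j, f j j = true) ∧ ¬ Fcut f

lemma PrM_single_row (i₀ : Fin n) (χ : (Fin n → Bool) → Prop) :
    PrM n p (fun f => χ (f i₀)) = PrR n p χ := by
  classical
  have h := PrM_pi (n := n) (p := p) (fun i r => i = i₀ → χ r)
  have e1 : PrM n p (fun f => ∀ i, i = i₀ → χ (f i)) = PrM n p (fun f => χ (f i₀)) :=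
    PW_congr fun f => ⟨fun h' => h' i₀ rfl, fun h' i hi => by subst hi; exact h'⟩
  rw [← e1, h]
  have : ∀ i, PrR n p (fun r => i = i₀ → χ r) = if i = i₀ then PrR n p χ else 1 := by
    intro i
    by_cases hi : i = i₀
    · subst hi; simp only [if_pos rfl]; exact PW_congr fun r => by simp
    · rw [if_neg hi]
      have : PrR n p (fun r => i = i₀ → χ r) = PrR n p (fun _ => True) :=
        PW_congr fun r => by simp [hi]
      rw [this]; exact PW_true WR_sum
  rw [Finset.prod_congr rfl fun i _ => this i]
  simp

lemma PrR_allFalse (h0 : 0 ≤ p) (h1 : p ≤ 1) (T : Finset (Fin n)) :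
    PrR n p (fun r => ∀ j ∈ T, r j = false) = (1 - p) ^ T.card := by
  rw [PrR_spec h0 h1 T (fun _ => false)]
  simp [wB, Finset.prod_const]

lemma PrM_noLoop (h0 : 0 ≤ p) (h1 : p ≤ 1) :
    PrM n p (fun f => ∀ i, f i i = false) = (1 - p) ^ n := by
  rw [PrM_pi (fun i r => r i = false)]
  have : ∀ i : Fin n, PrR n p (fun r => r i = false) = 1 - p := by
    intro i
    have := PrR_allFalse (n := n) h0 h1 {i}
    simp only [Finset.card_singleton, pow_one] at this
    rw [← this]
    exact PW_congr fun r => by simp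
  rw [Finset.prod_congr rfl fun i _ => this i]
  simp

lemma PrM_rowFalse (h0 : 0 ≤ p) (h1 : p ≤ 1) (i₀ : Fin n) :
    PrM n p (fun f => ∀ j, f i₀ j = false) = (1 - p) ^ n := by
  rw [PrM_single_row i₀ (fun r => ∀ j, r j = false)]
  have := PrR_allFalse (n := n) h0 h1 Finset.univ
  simp only [Finset.card_univ, Fintype.card_fin] at this
  rw [← this]
  exact PW_congr fun r => by simp

lemma PrM_cutS (h0 : 0 ≤ p) (h1 : p ≤ 1) (S : Finset (Fin n)) :
    PrM n p (fun f => ∀ u ∈ S, ∀ v, v ∉ S → f u v = false)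
      = ((1 - p) ^ (n - S.card)) ^ S.card := by
  classical
  have e1 : PrM n p (fun f => ∀ u ∈ S, ∀ v, v ∉ S → f u v = false)
      = PrM n p (fun f => ∀ u, (fun u r => u ∈ S → ∀ v ∈ Sᶜ, r v = false) u (f u)) := by
    refine PW_congr fun f => ?_
    constructor
    · intro h u hu v hv
      exact h u hu v (by simpa using hv)
    · intro h u hu v hv
      exact h u hu v (by simpa using hv)
  rw [e1, PrM_pi (fun u r => u ∈ S → ∀ v ∈ Sᶜ, r v = false)]
  have : ∀ u : Fin n, PrR n p (fun r => u ∈ S → ∀ v ∈ Sᶜ, r v = false)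
      = if u ∈ S then (1 - p) ^ (n - S.card) else 1 := by
    intro u
    by_cases hu : u ∈ S
    · rw [if_pos hu]
      have e2 : PrR n p (fun r => u ∈ S → ∀ v ∈ Sᶜ, r v = false)
          = PrR n p (fun r => ∀ v ∈ Sᶜ, r v = false) :=
        PW_congr fun r => by simp [hu]
      rw [e2, PrR_allFalse h0 h1]
      congr 1
      rw [Finset.card_compl]
      simp
    · rw [if_neg hu]
      have e2 : PrR n p (fun r => u ∈ S → ∀ v ∈ Sᶜ, r v = false)
          = PrR n p (fun _ => True) := PW_congr fun r => by simp [hu]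
      rw [e2]; exact PW_true WR_sum
  rw [Finset.prod_congr rfl fun u _ => this u, Finset.prod_ite_mem, Finset.univ_inter,
    Finset.prod_const]

lemma PrM_allRowsNonzero (h0 : 0 ≤ p) (h1 : p ≤ 1) :
    PrM n p (fun f => ∀ i, ∃ j, f i j = true) = (1 - (1 - p) ^ n) ^ n := by
  rw [PrM_pi (fun _ r => ∃ j, r j = true)]
  have : PrR n p (fun r => ∃ j, r j = true) = 1 - (1 - p) ^ n := by
    rw [show PrR n p (fun r => ∃ j, r j = true)
        = 1 - PrR n p (fun r => ¬ ∃ j, r j = true) from PW_compl WR_sum _]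
    have e : PrR n p (fun r => ¬ ∃ j, r j = true)
        = PrR n p (fun r => ∀ j ∈ Finset.univ, r j = false) := by
      refine PW_congr fun r => ?_
      simp only [Finset.mem_univ, true_implies]
      push_neg
      constructor
      · intro h j; simpa using h j
      · intro h j; simp [h j]
    show 1 - PrR n p _ = _
    rw [e, PrR_allFalse h0 h1]
    simp
  rw [Finset.prod_congr rfl fun i _ => this]
  simp

/-- Union bound for the cut event. -/
lemma PrM_Fcut_le (h0 : 0 ≤ p) (h1 : p ≤ 1) :
    PrM n p Fcut
      ≤ ∑ k ∈ Finset.Icc 1 (n-1), (n.choose k : ℝ) * (1 - p) ^ (k * (n - k)) := by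
  classical
  have hq : (0:ℝ) ≤ 1 - p := by linarith
  have step1 : PrM n p Fcut ≤
      ∑ S ∈ (Finset.univ : Finset (Finset (Fin n))).filter
          (fun S => S.Nonempty ∧ S ≠ Finset.univ),
        PrM n p (fun f => ∀ u ∈ S, ∀ v, v ∉ S → f u v = false) := by
    refine le_trans (PW_mono (WM_nonneg h0 h1) (ψ := fun f => ∃ S ∈ (Finset.univ : Finset (Finset (Fin n))).filter (fun S => S.Nonempty ∧ S ≠ Finset.univ), ∀ u ∈ S, ∀ v, v ∉ S → f u v = false) ?_) ?_
    · rintro f ⟨S, hS1, hS2, hS3⟩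
      refine ⟨S, by simp [hS1, hS2], fun u hu v hv => ?_⟩
      by_contra hne
      exact hv (hS3 u hu v (by simpa using hne))
    · exact PW_exists (WM_nonneg h0 h1) _ _
  refine step1.trans ?_
  have step2 : ∀ S ∈ (Finset.univ : Finset (Finset (Fin n))).filter
      (fun S => S.Nonempty ∧ S ≠ Finset.univ),
      PrM n p (fun f => ∀ u ∈ S, ∀ v, v ∉ S → f u v = false)
        = ((1 - p) ^ (n - S.card)) ^ S.card := fun S _ => PrM_cutS h0 h1 S
  rw [Finset.sum_congr rfl step2]
  -- now a counting argument
  have e3 : ∑ S ∈ (Finset.univ : Finset (Finset (Fin n))).filter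
      (fun S => S.Nonempty ∧ S ≠ Finset.univ), ((1 - p) ^ (n - S.card)) ^ S.card
      = ∑ S ∈ (Finset.univ : Finset (Fin n)).powerset,
        (if S.Nonempty ∧ S ≠ Finset.univ then ((1 - p) ^ (n - S.card)) ^ S.card else 0) := by
    rw [Finset.sum_filter, Finset.powerset_univ]
  rw [e3, Finset.sum_powerset]
  have inner : ∀ k ∈ Finset.range ((Finset.univ : Finset (Fin n)).card + 1),
      (∑ S ∈ Finset.powersetCard k (Finset.univ : Finset (Fin n)),
        (if S.Nonempty ∧ S ≠ Finset.univ then ((1 - p) ^ (n - S.card)) ^ S.card else 0))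
      ≤ (if k ∈ Finset.Icc 1 (n-1) then (n.choose k : ℝ) * (1 - p) ^ (k * (n - k)) else 0) := by
    intro k hk
    rw [Finset.mem_range, Finset.card_univ, Fintype.card_fin] at hk
    by_cases hk1 : k ∈ Finset.Icc 1 (n-1)
    · rw [if_pos hk1]
      rw [Finset.mem_Icc] at hk1
      calc _ ≤ ∑ _S ∈ Finset.powersetCard k (Finset.univ : Finset (Fin n)),
            (1 - p) ^ (k * (n - k)) := by
            refine Finset.sum_le_sum fun S hS => ?_
            have hcard : S.card = k := by
              rw [Finset.mem_powersetCard_univ] at hS; exact hS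
            have : ((1 - p) ^ (n - S.card)) ^ S.card = (1 - p) ^ (k * (n - k)) := by
              rw [hcard, ← pow_mul, Nat.mul_comm]
            rw [this]
            split
            · exact le_refl _
            · positivity
      _ = _ := by
            rw [Finset.sum_const, Finset.card_powersetCard, Finset.card_univ,
              Fintype.card_fin, nsmul_eq_mul]
    · rw [if_neg hk1]
      rw [Finset.mem_Icc, not_and_or] at hk1
      refine Finset.sum_nonpos fun S hS => ?_
      have hcard : S.card = k := by
        rw [Finset.mem_powersetCard_univ] at hS; exact hS
      rcases hk1 with h | h
      · -- k = 0
        have : k = 0 := by omega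
        subst this
        have : S = ∅ := Finset.card_eq_zero.mp hcard
        subst this
        simp
      · -- k ≥ n, so k = n and S = univ
        have hkn : k = n := by omega
        have : S = Finset.univ := by
          apply Finset.eq_univ_of_card
          rw [hcard, hkn, Fintype.card_fin]
        subst this
        simp
  calc _ ≤ ∑ k ∈ Finset.range ((Finset.univ : Finset (Fin n)).card + 1),
      (if k ∈ Finset.Icc 1 (n-1) then (n.choose k : ℝ) * (1 - p) ^ (k * (n - k)) else 0) :=
      Finset.sum_le_sum inner
  _ = _ := by
      rw [Finset.sum_ite_mem]
      congr 1
      rw [Finset.card_univ, Fintype.card_fin]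
      refine Finset.inter_eq_right.mpr fun k hk => ?_
      rw [Finset.mem_Icc] at hk
      rw [Finset.mem_range]
      omega

/-- Lower bound for the good event. -/
lemma PrM_Egood_ge (h0 : 0 ≤ p) (h1 : p ≤ 1) :
    1 - ((1 - p)^n + (n:ℝ) * (1 - p)^n
        + ∑ k ∈ Finset.Icc 1 (n-1), (n.choose k : ℝ) * (1 - p) ^ (k * (n - k)))
      ≤ PrM n p Egood := by
  classical
  have hc : PrM n p Egood = 1 - PrM n p (fun f => ¬ Egood f) := PW_compl WM_sum Egood
  rw [hc]
  have : PrM n p (fun f => ¬ Egood f)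
      ≤ (1 - p)^n + (n:ℝ) * (1 - p)^n
        + ∑ k ∈ Finset.Icc 1 (n-1), (n.choose k : ℝ) * (1 - p) ^ (k * (n - k)) := by
    have hmono : ∀ f : Fin n → Fin n → Bool, ¬ Egood f →
        ((∀ i, f i i = false) ∨ (∃ i, ∀ j, f i j = false)) ∨ Fcut f := by
      intro f hf
      unfold Egood at hf
      push_neg at hf
      by_cases hout : ∀ i, ∃ j, f i j = true
      · by_cases hloop : ∃ j, f j j = true
        · exact Or.inr (hf hout hloop)
        · push_neg at hloop
          exact Or.inl (Or.inl (by simpa using hloop))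
      · push_neg at hout
        obtain ⟨i, hi⟩ := hout
        exact Or.inl (Or.inr ⟨i, by simpa using hi⟩)
    refine le_trans (PW_mono (WM_nonneg h0 h1) hmono) ?_
    refine le_trans (PW_or (WM_nonneg h0 h1) _ _) ?_
    have b1 : PrM n p (fun f => (∀ i, f i i = false) ∨ (∃ i, ∀ j, f i j = false))
        ≤ (1 - p)^n + (n:ℝ) * (1 - p)^n := by
      refine le_trans (PW_or (WM_nonneg h0 h1) _ _) ?_
      have b11 : PW (WM n p) (fun f => ∀ i, f i i = false) = (1-p)^n := PrM_noLoop h0 h1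
      have b12 : PW (WM n p) (fun f => ∃ i, ∀ j, f i j = false) ≤ (n:ℝ) * (1 - p)^n := by
        refine le_trans (PW_exists_fintype (WM_nonneg h0 h1) _) ?_
        have e4 : ∀ i : Fin n, PW (WM n p) (fun f => ∀ j, f i j = false) = (1-p)^n :=
          fun i => PrM_rowFalse h0 h1 i
        rw [Finset.sum_congr rfl fun i _ => e4 i]
        simp [Finset.sum_const, Finset.card_univ]
      linarith
    have b1' : PW (WM n p) (fun f => (∀ i, f i i = false) ∨ (∃ i, ∀ j, f i j = false))
        ≤ (1 - p)^n + (n:ℝ) * (1 - p)^n := b1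
    have b2 : PW (WM n p) Fcut
        ≤ ∑ k ∈ Finset.Icc 1 (n-1), (n.choose k : ℝ) * (1 - p) ^ (k * (n - k)) :=
      PrM_Fcut_le (n := n) h0 h1
    linarith
  linarith

/-! ### Deterministic combinatorics -/

lemma reach_univ {n : ℕ} (f : Fin n → Fin n → Bool) (j₀ : Fin n)
    (hloop : f j₀ j₀ = true) (hcut : ¬ Fcut f) :
    ∀ i, 0 < ((toMat f) ^ n) i j₀ := by
  classical
  set A := toMat f with hA
  set R : ℕ → Finset (Fin n) := fun t => Finset.univ.filter (fun i => 0 < (A ^ t) i j₀)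
    with hRdef
  have memR : ∀ t i, i ∈ R t ↔ 0 < (A ^ t) i j₀ := by
    intro t i; simp [hRdef]
  have hstep : ∀ t i, i ∈ R (t+1) ↔ ∃ v, f i v = true ∧ v ∈ R t := by
    intro t i
    rw [memR]
    have e : (A ^ (t+1)) i j₀ = ∑ v, A i v * (A ^ t) v j₀ := by
      rw [pow_succ', Matrix.mul_apply]
    rw [e]
    constructor
    · intro hpos
      have hex : ∃ v ∈ Finset.univ, A i v * (A ^ t) v j₀ ≠ 0 := by
        by_contra hz
        push_neg at hz
        have : ∑ v, A i v * (A ^ t) v j₀ = 0 :=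
          Finset.sum_eq_zero (fun v hv => hz v hv)
        omega
      obtain ⟨v, _, hv⟩ := hex
      have h1 : A i v ≠ 0 := fun h => hv (by rw [h, zero_mul])
      have h2 : (A ^ t) v j₀ ≠ 0 := fun h => hv (by rw [h, mul_zero])
      refine ⟨v, ?_, (memR t v).2 (Nat.pos_of_ne_zero h2)⟩
      by_contra hfv
      rw [Bool.not_eq_true] at hfv
      exact h1 (by simp [hA, toMat, hfv])
    · rintro ⟨v, hfv, hvR⟩
      have h2 := (memR t v).1 hvR
      have h1 : 0 < A i v := by simp [hA, toMat, hfv]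
      calc 0 < A i v * (A ^ t) v j₀ := Nat.mul_pos h1 h2
      _ ≤ ∑ v, A i v * (A ^ t) v j₀ :=
          Finset.single_le_sum (f := fun v => A i v * (A ^ t) v j₀)
            (fun w _ => Nat.zero_le _) (Finset.mem_univ v)
  have hj₀ : ∀ t, j₀ ∈ R t := by
    intro t
    induction t with
    | zero => rw [memR]; simp [pow_zero, Matrix.one_apply]
    | succ t ih => exact (hstep t j₀).2 ⟨j₀, hloop, ih⟩
  have hmono : ∀ t, R t ⊆ R (t+1) := by
    intro t
    induction t with
    | zero =>
      intro i hi
      have : i = j₀ := by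
        by_contra hne
        rw [memR, pow_zero, Matrix.one_apply_ne hne] at hi
        exact lt_irrefl 0 hi
      subst this; exact hj₀ 1
    | succ t ih =>
      intro i hi
      rw [hstep] at hi
      obtain ⟨v, hfv, hvR⟩ := hi
      exact (hstep (t+1) i).2 ⟨v, hfv, ih hvR⟩
  have hfix : ∀ t, R t = R (t+1) → R t = Finset.univ := by
    intro t hEq
    by_contra hne
    apply hcut
    refine ⟨Finset.univ \ R t, ?_, ?_, ?_⟩
    · rw [Finset.sdiff_nonempty, Finset.univ_subset_iff]
      exact hne
    · intro hSuniv
      have : j₀ ∈ Finset.univ \ R t := by rw [hSuniv]; exact Finset.mem_univ j₀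
      exact (Finset.mem_sdiff.1 this).2 (hj₀ t)
    · intro u hu v hfv
      rw [Finset.mem_sdiff] at hu ⊢
      refine ⟨Finset.mem_univ v, fun hvR => ?_⟩
      have : u ∈ R (t+1) := (hstep t u).2 ⟨v, hfv, hvR⟩
      rw [← hEq] at this
      exact hu.2 this
  have hgrow : ∀ t, R t = Finset.univ ∨ t + 1 ≤ (R t).card := by
    intro t
    induction t with
    | zero =>
      right
      exact Finset.card_pos.2 ⟨j₀, hj₀ 0⟩
    | succ t ih =>
      rcases ih with h | h
      · left
        exact Finset.univ_subset_iff.1 (h ▸ hmono t)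
      · by_cases hEq : R t = R (t+1)
        · left
          rw [← hEq]
          exact hfix t hEq
        · right
          have hss : R t ⊂ R (t+1) := Finset.ssubset_iff_subset_ne.2 ⟨hmono t, hEq⟩
          have := Finset.card_lt_card hss
          omega
  have hn1 : 0 < n := Fin.pos j₀
  have hRn1 : R (n-1) = Finset.univ := by
    rcases hgrow (n-1) with h | h
    · exact h
    · apply Finset.eq_univ_of_card
      have hle : (R (n-1)).card ≤ n := by
        refine le_trans (Finset.card_le_univ _) ?_
        simp
      rw [Fintype.card_fin]
      omega
  have hRn : R n = Finset.univ := by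
    have := hmono (n-1)
    rw [hRn1, Finset.univ_subset_iff] at this
    have e : n - 1 + 1 = n := Nat.succ_pred_eq_of_pos hn1
    rw [e] at this
    exact this
  intro i
  exact (memR n i).1 (hRn ▸ Finset.mem_univ i)

lemma egood_threedir {n m : ℕ} (k₀ : Fin m) (L : ℝ) (hn : 0 < n) (hL : (n:ℝ) ≤ L)
    (b : Fin m → Fin n → Fin n → Bool) (h : Egood (b k₀)) :
    ThreeDirWithin (fun k => toMat (b k)) L := by
  obtain ⟨_hout, ⟨j₀, hloop⟩, hcut⟩ := h
  refine ⟨List.replicate n k₀, ?_, ?_, j₀, ?_⟩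
  · intro hnil
    have : (List.replicate n k₀).length = n := List.length_replicate
    rw [hnil] at this
    simp at this
    omega
  · rw [List.length_replicate]
    exact hL
  · intro i
    have e : (List.map (fun k => toMat (b k)) (List.replicate n k₀)).prod
        = (toMat (b k₀)) ^ n := by
      rw [List.map_replicate, List.prod_replicate]
    rw [e]
    exact reach_univ _ j₀ hloop hcut i

lemma directable_rows {n m : ℕ} (b : Fin m → Fin n → Fin n → Bool)
    (h : Is3Directable (fun k => toMat (b k))) :
    ∃ k, ∀ i, ∃ j, b k i j = true := by
  obtain ⟨w, hw, j₀, hcol⟩ := h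
  match w, hw with
  | k :: w', _ =>
    refine ⟨k, fun i => ?_⟩
    have hpos := hcol i
    rw [List.map_cons, List.prod_cons, Matrix.mul_apply] at hpos
    have hex : ∃ l ∈ Finset.univ, toMat (b k) i l
        * ((List.map (fun k => toMat (b k)) w').prod) l j₀ ≠ 0 := by
      by_contra hz
      push_neg at hz
      have : ∑ l, toMat (b k) i l
          * ((List.map (fun k => toMat (b k)) w').prod) l j₀ = 0 :=
        Finset.sum_eq_zero (fun l hl => hz l hl)
      omega
    obtain ⟨l, _, hl⟩ := hex
    have h1 : toMat (b k) i l ≠ 0 := fun h => hl (by rw [h, zero_mul])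
    refine ⟨l, ?_⟩
    by_contra hfv
    rw [Bool.not_eq_true] at hfv
    exact h1 (by simp [toMat, hfv])

/-! ### Analytic helpers -/

lemma one_sub_le_exp_neg (x : ℝ) : 1 - x ≤ Real.exp (-x) := by
  have := Real.add_one_le_exp (-x)
  linarith

lemma exp_neg_le_one_sub {α p : ℝ} (hα : 0 < α) (hp0 : 0 ≤ p)
    (hp : p ≤ α / (1 + α)) : Real.exp (-((1 + α) * p)) ≤ 1 - p := by
  have hα1 : (0:ℝ) < 1 + α := by linarith
  have hplt : p < 1 := by
    have h : α / (1 + α) < 1 := by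
      rw [div_lt_one hα1]; linarith
    linarith
  have hq : (0:ℝ) < 1 - p := by linarith
  have hlog := Real.log_le_sub_one_of_pos (inv_pos.2 hq)
  rw [Real.log_inv, inv_eq_one_div] at hlog
  have hmul : (1 + α) * p ≤ α := by
    rw [le_div_iff₀ hα1] at hp
    linarith
  have key : 1 / (1 - p) ≤ 1 + (1 + α) * p := by
    rw [div_le_iff₀ hq]
    nlinarith
  have hlog2 : -((1 + α) * p) ≤ Real.log (1 - p) := by linarith
  calc Real.exp (-((1 + α) * p)) ≤ Real.exp (Real.log (1 - p)) := Real.exp_le_exp.2 hlog2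
  _ = 1 - p := Real.exp_log hq

lemma tendsto_exp_neg_mul_log {γ : ℝ} (hγ : 0 < γ) :
    Tendsto (fun n : ℕ => Real.exp (-(γ * Real.log n))) atTop (nhds 0) := by
  have h1 : Tendsto (fun n : ℕ => Real.log n) atTop atTop :=
    Real.tendsto_log_atTop.comp tendsto_natCast_atTop_atTop
  have h2 : Tendsto (fun n : ℕ => γ * Real.log n) atTop atTop :=
    h1.const_mul_atTop hγ
  have h3 : Tendsto (fun n : ℕ => -(γ * Real.log n)) atTop atBot :=
    tendsto_neg_atTop_atBot.comp h2
  exact Real.tendsto_exp_atBot.comp h3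

lemma eventually_le_log (K : ℝ) : ∀ᶠ n : ℕ in atTop, K ≤ Real.log n :=
  (Real.tendsto_log_atTop.comp tendsto_natCast_atTop_atTop).eventually_ge_atTop K

lemma geom_sum_le_inv (ρ : ℝ) (h0 : 0 ≤ ρ) (h1 : ρ < 1) (N : ℕ) :
    ∑ j ∈ Finset.range N, ρ ^ j ≤ 1 / (1 - ρ) := by
  have hne : ρ ≠ 1 := ne_of_lt h1
  rw [geom_sum_eq hne]
  have e : (ρ ^ N - 1) / (ρ - 1) = (1 - ρ ^ N) / (1 - ρ) := by
    rw [div_eq_div_iff (by intro h; apply hne; linarith) (by intro h; apply hne; linarith)]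
    ring
  rw [e, div_le_div_iff₀ (by linarith) (by linarith)]
  have hpow : 0 ≤ ρ ^ N := pow_nonneg h0 N
  nlinarith

/-- Geometric tail bound: `∑_{k=1}^{n-1} ρ^k ≤ 2ρ` when `ρ ≤ 1/2`. -/
lemma sum_Icc_pow_le (ρ : ℝ) (h0 : 0 ≤ ρ) (h1 : ρ ≤ 1/2) (n : ℕ) :
    ∑ k ∈ Finset.Icc 1 (n-1), ρ ^ k ≤ 2 * ρ := by
  rcases Nat.eq_zero_or_pos n with rfl | hn
  · simp
    positivity
  have hIcc : Finset.Icc 1 (n-1) = Finset.Ico 1 n := by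
    ext k; rw [Finset.mem_Icc, Finset.mem_Ico]; omega
  rw [hIcc, Finset.sum_Ico_eq_sum_range]
  have e : ∀ j, ρ ^ (1 + j) = ρ * ρ ^ j := fun j => by rw [pow_add, pow_one]
  rw [Finset.sum_congr rfl fun j _ => e j, ← Finset.mul_sum]
  have hg := geom_sum_le_inv ρ h0 (by linarith) (n - 1)
  have h2 : 1 / (1 - ρ) ≤ 2 := by
    rw [div_le_iff₀ (by linarith)]
    linarith
  calc ρ * ∑ j ∈ Finset.range (n - 1), ρ ^ j ≤ ρ * 2 :=
      mul_le_mul_of_nonneg_left (hg.trans h2) h0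
  _ = 2 * ρ := by ring

lemma sum_Icc_pow_rev_le (ρ : ℝ) (h0 : 0 ≤ ρ) (h1 : ρ ≤ 1/2) (n : ℕ) :
    ∑ k ∈ Finset.Icc 1 (n-1), ρ ^ (n - k) ≤ 2 * ρ := by
  rcases Nat.eq_zero_or_pos n with rfl | hn
  · simp
    positivity
  have hIcc : Finset.Icc 1 (n-1) = Finset.Ico 1 n := by
    ext k; rw [Finset.mem_Icc, Finset.mem_Ico]; omega
  have e : ∑ k ∈ Finset.Icc 1 (n-1), ρ ^ (n - k) = ∑ k ∈ Finset.Icc 1 (n-1), ρ ^ k := by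
    rw [hIcc, Finset.sum_Ico_eq_sum_range, Finset.sum_Ico_eq_sum_range]
    have e1 : ∀ i ∈ Finset.range (n-1), ρ ^ (n - (1 + i))
        = (fun j => ρ ^ (1 + j)) ((n - 1) - 1 - i) := by
      intro i hi
      rw [Finset.mem_range] at hi
      simp only
      congr 1
      omega
    rw [Finset.sum_congr rfl e1, Finset.sum_range_reflect (fun j => ρ ^ (1 + j)) (n-1)]
  rw [e]
  exact sum_Icc_pow_le ρ h0 h1 n

/-! ### Nat helpers -/

lemma choose_le_two_pow (n k : ℕ) : n.choose k ≤ 2 ^ n := by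
  rcases le_or_gt k n with h | h
  · calc n.choose k ≤ ∑ i ∈ Finset.range (n+1), n.choose i :=
        Finset.single_le_sum (fun i _ => Nat.zero_le _)
          (Finset.mem_range.2 (Nat.lt_succ_of_le h))
    _ = 2 ^ n := Nat.sum_range_choose n
  · rw [Nat.choose_eq_zero_of_lt h]
    exact Nat.zero_le _

lemma choose_le_pow_min (n k : ℕ) (hk : k ≤ n) :
    n.choose k ≤ n ^ (min k (n - k)) := by
  rcases le_total k (n - k) with h | h
  · rw [min_eq_left h]
    exact Nat.choose_le_pow n k
  · rw [min_eq_right h]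
    rw [← Nat.choose_symm hk]
    exact Nat.choose_le_pow n (n - k)

lemma two_log_le {n : ℕ} (hn : 1 ≤ n) : 2 * Real.log n ≤ n := by
  have hn1 : (1:ℝ) ≤ (n:ℝ) := by exact_mod_cast hn
  have hpos : (0:ℝ) < (n:ℝ) := by linarith
  have hs : Real.log n = 2 * Real.log (Real.sqrt n) := by
    rw [Real.log_sqrt (le_of_lt hpos)]
    ring
  have h1 : Real.log (Real.sqrt n) ≤ Real.sqrt n - 1 :=
    Real.log_le_sub_one_of_pos (Real.sqrt_pos.2 hpos)
  have h2 : Real.sqrt n ^ 2 = (n:ℝ) := Real.sq_sqrt (le_of_lt hpos)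
  have h3 : (0:ℝ) ≤ Real.sqrt n := Real.sqrt_nonneg _
  nlinarith [sq_nonneg (Real.sqrt n - 2)]

/-! ### The main per-n estimate for part (i) -/

set_option maxHeartbeats 2000000 in
lemma cut_sum_bound (n : ℕ) (p σ : ℝ) (hσ : 1 < σ)
    (hp0 : 0 ≤ p) (hp1 : p ≤ 1) (hn : 1 ≤ n)
    (hx : σ * Real.log n ≤ (n:ℝ) * p)
    (hρ : Real.exp (-(3*(σ-1)/4 * Real.log n)) ≤ 1/2)
    (hlogK : (8/(σ-1)) * (1 + Real.log 2) ≤ Real.log n) :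
    ∑ k ∈ Finset.Icc 1 (n-1), (n.choose k : ℝ) * (1 - p) ^ (k * (n - k))
      ≤ 4 * Real.exp (-(3*(σ-1)/4 * Real.log n)) + Real.exp (-Real.log n) := by
  have hσ1 : (0:ℝ) < σ - 1 := by linarith
  have hσ0 : (0:ℝ) < σ := by linarith
  obtain ⟨ε, hε⟩ : ∃ ε : ℝ, ε = (σ-1)/(4*σ) := ⟨_, rfl⟩
  have hε0 : 0 < ε := by rw [hε]; positivity
  have hεσ : ε * σ = (σ-1)/4 := by rw [hε]; field_simp
  obtain ⟨ρ, hρdef⟩ : ∃ ρ : ℝ, ρ = Real.exp (-(3*(σ-1)/4 * Real.log n)) := ⟨_, rfl⟩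
  rw [← hρdef] at hρ ⊢
  have hρ0 : 0 ≤ ρ := by rw [hρdef]; exact le_of_lt (Real.exp_pos _)
  obtain ⟨M₂, hM₂⟩ : ∃ M : ℝ, M = Real.exp ((n:ℝ) * Real.log 2 - (σ-1)/8 * ((n:ℝ) * Real.log n)) := ⟨_, rfl⟩
  have hM₂0 : 0 ≤ M₂ := by rw [hM₂]; exact le_of_lt (Real.exp_pos _)
  have hlog0 : 0 ≤ Real.log n := by
    have h2 : (0:ℝ) < 1 + Real.log 2 := by positivity
    nlinarith [mul_pos (div_pos (by norm_num : (0:ℝ) < 8) hσ1) h2]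
  have hnpos : (0:ℝ) < (n:ℝ) := by exact_mod_cast hn
  have hexplog : Real.exp (Real.log n) = (n:ℝ) := Real.exp_log hnpos
  -- per-term bound
  have hterm : ∀ k ∈ Finset.Icc 1 (n-1),
      (n.choose k : ℝ) * (1 - p) ^ (k * (n - k)) ≤ ρ ^ k + ρ ^ (n - k) + M₂ := by
    intro k hk
    rw [Finset.mem_Icc] at hk
    obtain ⟨μ, hμdef⟩ : ∃ μ : ℕ, μ = min k (n - k) := ⟨_, rfl⟩
    have hμ1 : 1 ≤ μ := by omega
    have hμk : μ ≤ k := by omega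
    have hμnk : μ ≤ n - k := by omega
    have hμn2 : n ≤ 2 * (n - μ) := by omega
    have hμprod : μ * (n - μ) = k * (n - k) := by
      rcases Nat.le_total k (n - k) with h | h
      · have h1 : μ = k := by omega
        rw [h1]
      · have h1 : μ = n - k := by omega
        have h2 : n - (n - k) = k := by omega
        rw [h1, h2, Nat.mul_comm]
    -- bound (1-p)^(k(n-k)) ≤ exp(- (k(n-k)) * p)
    have hqpow : (1 - p) ^ (k * (n - k)) ≤ Real.exp (-(((k * (n - k) : ℕ) : ℝ) * p)) := by
      have h1 : (1 - p) ^ (k * (n - k)) ≤ (Real.exp (-p)) ^ (k * (n - k)) :=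
        pow_le_pow_left₀ (by linarith) (one_sub_le_exp_neg p) _
      refine h1.trans (le_of_eq ?_)
      rw [← Real.exp_nat_mul]
      congr 1
      ring
    have hchoose_pos : (0:ℝ) ≤ (n.choose k : ℝ) := Nat.cast_nonneg _
    have hQ0 : (0:ℝ) ≤ Real.exp (-(((k * (n - k) : ℕ) : ℝ) * p)) := le_of_lt (Real.exp_pos _)
    by_cases hcase : (μ:ℝ) ≤ ε * n
    · -- small side: term ≤ ρ^μ
      have hch : (n.choose k : ℝ) ≤ (n:ℝ) ^ μ := by
        have h5 := choose_le_pow_min n k (by omega)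
        rw [← hμdef] at h5
        exact_mod_cast h5
      have hnpow : ((n:ℝ)) ^ μ = Real.exp ((μ:ℝ) * Real.log n) := by
        conv_lhs => rw [← hexplog]
        rw [← Real.exp_nat_mul]
      have hKp : (μ:ℝ) * ((1-ε) * σ * Real.log n) ≤ ((k * (n - k) : ℕ) : ℝ) * p := by
        have hc1 : ((k * (n - k) : ℕ) : ℝ) = (μ:ℝ) * ((n:ℝ) - (μ:ℝ)) := by
          rw [← hμprod]
          push_cast [Nat.cast_sub (by omega : μ ≤ n)]
          ring
        rw [hc1]
        have hnμ : (1-ε) * (n:ℝ) ≤ (n:ℝ) - (μ:ℝ) := by nlinarith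
        have hp' : σ * Real.log n / (n:ℝ) ≤ p := by
          rw [div_le_iff₀ hnpos]
          nlinarith
        have hμ0 : (0:ℝ) ≤ (μ:ℝ) := Nat.cast_nonneg _
        have h1ε : (0:ℝ) ≤ 1 - ε := by
          have : ε < 1 := by
            rw [hε, div_lt_one (by linarith)]
            linarith
          linarith
        calc (μ:ℝ) * ((1-ε) * σ * Real.log n) ≤ (μ:ℝ) * ((1-ε) * ((n:ℝ) * p)) := by
              have := mul_le_mul_of_nonneg_left hx h1ε
              exact mul_le_mul_of_nonneg_left (by nlinarith) hμ0
        _ = ((μ:ℝ) * ((1-ε) * (n:ℝ))) * p := by ring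
        _ ≤ ((μ:ℝ) * ((n:ℝ) - (μ:ℝ))) * p := by
              refine mul_le_mul_of_nonneg_right ?_ hp0
              exact mul_le_mul_of_nonneg_left hnμ hμ0
      have hbound : (n.choose k : ℝ) * (1 - p) ^ (k * (n - k)) ≤ ρ ^ μ := by
        calc (n.choose k : ℝ) * (1 - p) ^ (k * (n - k))
            ≤ Real.exp ((μ:ℝ) * Real.log n) * Real.exp (-(((k * (n - k) : ℕ) : ℝ) * p)) := by
              refine mul_le_mul (hnpow ▸ hch) hqpow ?_ (le_of_lt (Real.exp_pos _))
              exact pow_nonneg (by linarith) _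
        _ = Real.exp ((μ:ℝ) * Real.log n - ((k * (n - k) : ℕ) : ℝ) * p) := by
              rw [← Real.exp_add]; ring_nf
        _ ≤ Real.exp ((μ:ℝ) * Real.log n - (μ:ℝ) * ((1-ε) * σ * Real.log n)) := by
              refine Real.exp_le_exp.2 ?_
              linarith
        _ = ρ ^ μ := by
              rw [hρdef, ← Real.exp_nat_mul]
              congr 1
              have : (1 - ε) * σ = 1 + 3*(σ-1)/4 := by
                rw [hε]; field_simp; ring
              rw [this]
              ring
      have : ρ ^ μ ≤ ρ ^ k + ρ ^ (n - k) := by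
        rcases Nat.le_total k (n - k) with h | h
        · have : μ = k := by omega
          rw [this]
          have : (0:ℝ) ≤ ρ ^ (n - k) := pow_nonneg hρ0 _
          linarith
        · have : μ = n - k := by omega
          rw [this]
          have : (0:ℝ) ≤ ρ ^ k := pow_nonneg hρ0 _
          linarith
      linarith [hbound, this, hM₂0]
    · -- middle range: term ≤ M₂
      push_neg at hcase
      have hch : (n.choose k : ℝ) ≤ Real.exp ((n:ℝ) * Real.log 2) := by
        have h1 : (n.choose k : ℝ) ≤ (2:ℝ) ^ n := by
          exact_mod_cast choose_le_two_pow n k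
        refine h1.trans (le_of_eq ?_)
        conv_lhs => rw [show (2:ℝ) = Real.exp (Real.log 2) from
          (Real.exp_log (by norm_num)).symm]
        rw [← Real.exp_nat_mul]
      have hKp : (σ-1)/8 * ((n:ℝ) * Real.log n) ≤ ((k * (n - k) : ℕ) : ℝ) * p := by
        have hc1 : ((k * (n - k) : ℕ) : ℝ) = (μ:ℝ) * ((n:ℝ) - (μ:ℝ)) := by
          rw [← hμprod]
          push_cast [Nat.cast_sub (by omega : μ ≤ n)]
          ring
        rw [hc1]
        have h1 : (n:ℝ)/2 ≤ (n:ℝ) - (μ:ℝ) := by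
          have : ((2 * (n - μ) : ℕ) : ℝ) ≥ (n:ℝ) := by exact_mod_cast hμn2
          push_cast [Nat.cast_sub (by omega : μ ≤ n)] at this
          linarith
        have hμ0 : (0:ℝ) ≤ (μ:ℝ) := Nat.cast_nonneg _
        have hx0 : 0 ≤ (n:ℝ) * p := by positivity
        -- μ(n-μ)p ≥ (εn)(n/2)p = (ε/2) n (np) ≥ (ε/2) n σ log n
        have step1 : (ε * (n:ℝ)) * ((n:ℝ)/2) * p ≤ (μ:ℝ) * ((n:ℝ) - (μ:ℝ)) * p := by
          refine mul_le_mul_of_nonneg_right ?_ hp0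
          have h2 : (0:ℝ) ≤ ε * (n:ℝ) := by positivity
          have h3 : (0:ℝ) ≤ (n:ℝ)/2 := by positivity
          refine mul_le_mul (le_of_lt hcase) h1 h3 hμ0
        have step2 : (σ-1)/8 * ((n:ℝ) * Real.log n) ≤ (ε * (n:ℝ)) * ((n:ℝ)/2) * p := by
          have e1 : (ε * (n:ℝ)) * ((n:ℝ)/2) * p = (ε/2) * (n:ℝ) * ((n:ℝ) * p) := by ring
          rw [e1]
          have h4 : (ε/2) * (n:ℝ) * (σ * Real.log n) ≤ (ε/2) * (n:ℝ) * ((n:ℝ) * p) := by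
            refine mul_le_mul_of_nonneg_left hx (by positivity)
          refine le_trans (le_of_eq ?_) h4
          rw [hε]
          field_simp
          ring
        linarith
      have : (n.choose k : ℝ) * (1 - p) ^ (k * (n - k)) ≤ M₂ := by
        calc (n.choose k : ℝ) * (1 - p) ^ (k * (n - k))
            ≤ Real.exp ((n:ℝ) * Real.log 2) * Real.exp (-(((k * (n - k) : ℕ) : ℝ) * p)) :=
              mul_le_mul hch hqpow (pow_nonneg (by linarith) _) (le_of_lt (Real.exp_pos _))
        _ = Real.exp ((n:ℝ) * Real.log 2 - ((k * (n - k) : ℕ) : ℝ) * p) := by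
              rw [← Real.exp_add]; ring_nf
        _ ≤ M₂ := by
              rw [hM₂]
              refine Real.exp_le_exp.2 ?_
              linarith
      have hk1 : (0:ℝ) ≤ ρ ^ k := pow_nonneg hρ0 _
      have hk2 : (0:ℝ) ≤ ρ ^ (n - k) := pow_nonneg hρ0 _
      linarith
  -- sum up
  calc ∑ k ∈ Finset.Icc 1 (n-1), (n.choose k : ℝ) * (1 - p) ^ (k * (n - k))
      ≤ ∑ k ∈ Finset.Icc 1 (n-1), (ρ ^ k + ρ ^ (n - k) + M₂) := Finset.sum_le_sum hterm
  _ = (∑ k ∈ Finset.Icc 1 (n-1), ρ ^ k) + (∑ k ∈ Finset.Icc 1 (n-1), ρ ^ (n - k))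
      + (Finset.Icc 1 (n-1)).card * M₂ := by
      rw [Finset.sum_add_distrib, Finset.sum_add_distrib, Finset.sum_const, nsmul_eq_mul]
  _ ≤ 2 * ρ + 2 * ρ + (n:ℝ) * M₂ := by
      have h1 := sum_Icc_pow_le ρ hρ0 hρ n
      have h2 := sum_Icc_pow_rev_le ρ hρ0 hρ n
      have h3 : ((Finset.Icc 1 (n-1)).card : ℝ) ≤ (n:ℝ) := by
        rw [Nat.card_Icc]
        exact_mod_cast Nat.le_of_lt_succ (by omega)
      have := mul_le_mul_of_nonneg_right h3 hM₂0
      linarith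
  _ ≤ 4 * ρ + Real.exp (-Real.log n) := by
      have hnM : (n:ℝ) * M₂ ≤ Real.exp (-Real.log n) := by
        have e1 : (n:ℝ) * M₂ = Real.exp (Real.log n + ((n:ℝ) * Real.log 2
            - (σ-1)/8 * ((n:ℝ) * Real.log n))) := by
          rw [Real.exp_add, hexplog, hM₂]
        rw [e1]
        refine Real.exp_le_exp.2 ?_
        -- log n + n log 2 - (σ-1)/8 n log n ≤ - log n
        have h2l : 2 * Real.log n ≤ (n:ℝ) := two_log_le hn
        have hK : (1 + Real.log 2) * (n:ℝ) ≤ (σ-1)/8 * ((n:ℝ) * Real.log n) := by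
          have := mul_le_mul_of_nonneg_right hlogK (le_of_lt hnpos)
          calc (1 + Real.log 2) * (n:ℝ)
              = (σ-1)/8 * ((8/(σ-1)) * (1 + Real.log 2)) * (n:ℝ) := by
                field_simp
          _ ≤ (σ-1)/8 * Real.log n * (n:ℝ) := by
                refine mul_le_mul_of_nonneg_right ?_ (le_of_lt hnpos)
                exact mul_le_mul_of_nonneg_left hlogK (by positivity)
          _ = (σ-1)/8 * ((n:ℝ) * Real.log n) := by ring
        have hl2 : (0:ℝ) ≤ Real.log 2 := Real.log_nonneg (by norm_num)
        nlinarith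
      linarith

/-! ### Part (i) -/

set_option maxHeartbeats 2000000 in
lemma part_i (m : ℕ) (hm : 2 ≤ m) (c α : ℝ) (hα : 0 < α)
    (p : ℕ → ℝ) (hp : ∀ n, p n ∈ Set.Icc (0 : ℝ) 1)
    (hev : ∀ᶠ n : ℕ in atTop, (1 + α) * (Real.log n + c) / n ≤ p n) :
    Tendsto (fun n : ℕ => bernoulliProb n m (p n)
        (fun M => ThreeDirWithin M ((1:ℝ) * n * Real.log n))) atTop (nhds 1) := by
  classical
  have hm0 : 0 < m := by omega
  set σ : ℝ := 1 + α/2 with hσdef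
  have hσ : 1 < σ := by rw [hσdef]; linarith
  have hσ1 : (0:ℝ) < σ - 1 := by linarith
  set G : ℕ → ℝ := fun n => 2 * Real.exp (-((σ-1) * Real.log n))
      + (4 * Real.exp (-(3*(σ-1)/4 * Real.log n)) + Real.exp (-Real.log n)) with hGdef
  have hG0 : Tendsto G atTop (nhds 0) := by
    have t1 := tendsto_exp_neg_mul_log hσ1
    have t2 := tendsto_exp_neg_mul_log (show (0:ℝ) < 3*(σ-1)/4 by linarith)
    have t3 := tendsto_exp_neg_mul_log (show (0:ℝ) < 1 by norm_num)
    have t3' : Tendsto (fun n : ℕ => Real.exp (-Real.log n)) atTop (nhds 0) := by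
      refine t3.congr fun n => ?_
      rw [one_mul]
    have := ((t1.const_mul 2).add ((t2.const_mul 4).add t3'))
    simpa using this
  have hg1 : Tendsto (fun n : ℕ => 1 - G n) atTop (nhds 1) := by
    have := (tendsto_const_nhds (x := (1:ℝ)) (f := atTop)).sub hG0
    simpa using this
  set K₁ : ℝ := 2*(1+α)*(1+|c|)/α with hK₁
  set K₂ : ℝ := (8/(σ-1)) * (1 + Real.log 2) with hK₂
  set K₃ : ℝ := (4/(3*(σ-1))) * Real.log 2 with hK₃
  refine tendsto_of_tendsto_of_tendsto_of_le_of_le' hg1 tendsto_const_nhds ?_ ?_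
  · -- 1 - G n ≤ P n eventually
    filter_upwards [hev, eventually_le_log K₁, eventually_le_log K₂, eventually_le_log K₃,
      eventually_le_log 1, Filter.eventually_ge_atTop 1] with n hpn hl1 hl2 hl3 hl4 hn1
    have hn0 : (0:ℝ) < (n:ℝ) := by exact_mod_cast hn1
    have hp0 : 0 ≤ p n := (hp n).1
    have hp1 : p n ≤ 1 := (hp n).2
    have hlog0 : 0 ≤ Real.log n := le_trans (by norm_num) hl4
    -- key bound: σ log n ≤ n p n
    have hx : σ * Real.log n ≤ (n:ℝ) * p n := by
      have h1 : (1 + α) * (Real.log n + c) ≤ p n * n := by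
        rw [← div_le_iff₀ hn0]
        exact hpn
      have hcabs : -c ≤ |c| := neg_le_abs c
      have habs0 : 0 ≤ |c| := abs_nonneg c
      have h2 : σ * Real.log n ≤ (1 + α) * (Real.log n + c) := by
        rw [hσdef]
        have h3 : (α/2) * Real.log n ≥ (α/2) * K₁ := by
          exact mul_le_mul_of_nonneg_left hl1 (by linarith)
        have h4 : (α/2) * K₁ = (1+α)*(1+|c|) := by
          rw [hK₁]; field_simp
        nlinarith
      linarith [h2.trans h1]
    have hρ : Real.exp (-(3*(σ-1)/4 * Real.log n)) ≤ 1/2 := by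
      have h1 : Real.log 2 ≤ 3*(σ-1)/4 * Real.log n := by
        have h2 : 3*(σ-1)/4 * K₃ = Real.log 2 := by
          rw [hK₃]; field_simp
        have := mul_le_mul_of_nonneg_left hl3 (show (0:ℝ) ≤ 3*(σ-1)/4 by linarith)
        linarith
      calc Real.exp (-(3*(σ-1)/4 * Real.log n)) ≤ Real.exp (-Real.log 2) :=
          Real.exp_le_exp.2 (by linarith)
      _ = 1/2 := by
          rw [Real.exp_neg, Real.exp_log (by norm_num)]
          norm_num
    have hcut := cut_sum_bound n (p n) σ hσ hp0 hp1 hn1 hx hρ (hK₂ ▸ hl2)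
    -- first terms
    have hq0 : (0:ℝ) ≤ 1 - p n := by linarith
    have hqn : (1 - p n)^n ≤ Real.exp (-((σ-1+1) * Real.log n)) := by
      calc (1 - p n)^n ≤ (Real.exp (-(p n)))^n :=
          pow_le_pow_left₀ hq0 (one_sub_le_exp_neg (p n)) n
      _ = Real.exp (-((n:ℝ) * p n)) := by
          rw [← Real.exp_nat_mul]; congr 1; ring
      _ ≤ Real.exp (-((σ-1+1) * Real.log n)) := by
          refine Real.exp_le_exp.2 ?_
          have : (σ-1+1) * Real.log n = σ * Real.log n := by ring
          rw [this]
          linarith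
    have hfirst : (1 - p n)^n + (n:ℝ) * (1 - p n)^n ≤ 2 * Real.exp (-((σ-1) * Real.log n)) := by
      have hqnn : (0:ℝ) ≤ (1 - p n)^n := pow_nonneg hq0 n
      have e1 : Real.exp (-((σ-1+1) * Real.log n))
          = Real.exp (-((σ-1) * Real.log n)) * Real.exp (-Real.log n) := by
        rw [← Real.exp_add]; congr 1; ring
      have hexplog : Real.exp (Real.log n) = (n:ℝ) := Real.exp_log hn0
      have h2 : (1 + (n:ℝ)) * (1 - p n)^n
          ≤ (1 + (n:ℝ)) * Real.exp (-((σ-1+1) * Real.log n)) := by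
        refine mul_le_mul_of_nonneg_left hqn (by linarith)
      have h3 : (1 + (n:ℝ)) * Real.exp (-((σ-1+1) * Real.log n))
          ≤ 2 * Real.exp (-((σ-1) * Real.log n)) := by
        rw [e1]
        have h4 : (1 + (n:ℝ)) ≤ 2 * (n:ℝ) := by
          have : (1:ℝ) ≤ (n:ℝ) := by exact_mod_cast hn1
          linarith
        have h5 : Real.exp (-Real.log n) = ((n:ℝ))⁻¹ := by
          rw [Real.exp_neg, hexplog]
        calc (1 + (n:ℝ)) * (Real.exp (-((σ-1) * Real.log n)) * Real.exp (-Real.log n))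
            ≤ 2 * (n:ℝ) * (Real.exp (-((σ-1) * Real.log n)) * ((n:ℝ))⁻¹) := by
              rw [h5]
              refine mul_le_mul_of_nonneg_right h4 ?_
              positivity
        _ = 2 * Real.exp (-((σ-1) * Real.log n)) * ((n:ℝ) * ((n:ℝ))⁻¹) := by ring
        _ = 2 * Real.exp (-((σ-1) * Real.log n)) := by
              rw [mul_inv_cancel₀ (ne_of_gt hn0), mul_one]
      nlinarith [h2.trans h3]
    -- probability chain
    have hEg := PrM_Egood_ge (n := n) (p := p n) hp0 hp1
    have hbad : (1 - p n)^n + (n:ℝ) * (1 - p n)^n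
        + ∑ k ∈ Finset.Icc 1 (n-1), (n.choose k : ℝ) * (1 - p n) ^ (k * (n - k)) ≤ G n := by
      rw [hGdef]
      dsimp only
      linarith
    set k₀ : Fin m := ⟨0, hm0⟩ with hk₀
    have hmono : ∀ b : Fin m → Fin n → Fin n → Bool, Egood (b k₀) →
        ThreeDirWithin (fun k => toMat (b k)) ((1:ℝ) * n * Real.log n) := by
      intro b hb
      refine egood_threedir k₀ _ (by omega) ?_ b hb
      have hln1 : (1:ℝ) ≤ Real.log n := hl4
      have hn1' : (1:ℝ) ≤ (n:ℝ) := by exact_mod_cast hn1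
      nlinarith
    rw [bernoulliProb_eq]
    calc 1 - G n ≤ PrM n (p n) Egood := by linarith
    _ = PrQ n m (p n) (fun b => Egood (b k₀)) := (PrQ_marginal hp0 hp1 k₀ Egood).symm
    _ ≤ PrQ n m (p n) (fun b => ThreeDirWithin (fun k => toMat (b k))
        ((1:ℝ) * n * Real.log n)) := PW_mono (WQ_nonneg hp0 hp1) hmono
  · -- P n ≤ 1
    filter_upwards with n
    rw [bernoulliProb_eq]
    exact PW_le_one (WQ_nonneg (hp n).1 (hp n).2) WQ_sum _

/-! ### Part (ii) -/

set_option maxHeartbeats 2000000 in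
lemma part_ii (m : ℕ) (hm : 2 ≤ m) (c α : ℝ) (hα : 0 < α)
    (p : ℕ → ℝ) (hp : ∀ n, p n ∈ Set.Icc (0 : ℝ) 1)
    (hev : ∀ᶠ n : ℕ in atTop, p n ≤ (1 - α) * (Real.log n + c) / n) :
    Tendsto (fun n : ℕ => bernoulliProb n m (p n)
        (fun M => Is3Directable M)) atTop (nhds 0) := by
  classical
  set β : ℝ := min α (1/2) with hβdef
  have hβ0 : 0 < β := lt_min hα (by norm_num)
  have hβ1 : β ≤ 1/2 := min_le_right _ _
  have hβα : β ≤ α := min_le_left _ _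
  set d : ℝ := (1 - β^2) * c with hd
  set γ : ℝ := β^2 with hγ
  have hγ0 : 0 < γ := by rw [hγ]; positivity
  set U : ℕ → ℝ := fun n => (m:ℝ) * Real.exp (-(Real.exp (γ * Real.log n - d))) with hU
  have hU0 : Tendsto U atTop (nhds 0) := by
    have t1 : Tendsto (fun n : ℕ => γ * Real.log n - d) atTop atTop := by
      refine tendsto_atTop_add_const_right _ (-d) ?_
      exact (Real.tendsto_log_atTop.comp tendsto_natCast_atTop_atTop).const_mul_atTop hγ0
    have t2 : Tendsto (fun n : ℕ => Real.exp (γ * Real.log n - d)) atTop atTop :=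
      Real.tendsto_exp_atTop.comp t1
    have t3 : Tendsto (fun n : ℕ => -(Real.exp (γ * Real.log n - d))) atTop atBot :=
      tendsto_neg_atTop_atBot.comp t2
    have t4 : Tendsto (fun n : ℕ => Real.exp (-(Real.exp (γ * Real.log n - d))))
        atTop (nhds 0) := Real.tendsto_exp_atBot.comp t3
    have := t4.const_mul (m:ℝ)
    simpa using this
  -- eventual smallness of p
  have hsmall : ∀ᶠ n : ℕ in atTop, (1 - β) * (Real.log n + c) / n ≤ β / (1 + β) := by
    have hdiv : Tendsto (fun n : ℕ => (1 - β) * (Real.log n + c) / n) atTop (nhds 0) := by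
      have h1 : Tendsto (fun x : ℝ => Real.log x / x) atTop (nhds 0) :=
        Real.isLittleO_log_id_atTop.tendsto_div_nhds_zero
      have h2 : Tendsto (fun n : ℕ => Real.log n / n) atTop (nhds 0) :=
        h1.comp tendsto_natCast_atTop_atTop
      have h3 : Tendsto (fun n : ℕ => c / n) atTop (nhds 0) :=
        tendsto_const_div_atTop_nhds_zero_nat c
      have h4 := (h2.add h3).const_mul (1 - β)
      simp only [add_zero, mul_zero] at h4
      refine Tendsto.congr' ?_ h4
      filter_upwards [Filter.eventually_gt_atTop 0] with n hn
      have hn0 : (0:ℝ) < (n:ℝ) := by exact_mod_cast hn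
      field_simp
    have hpos : (0:ℝ) < β / (1 + β) := by positivity
    exact hdiv.eventually (eventually_le_nhds hpos)
  refine tendsto_of_tendsto_of_tendsto_of_le_of_le' tendsto_const_nhds hU0 ?_ ?_
  · filter_upwards with n
    rw [bernoulliProb_eq]
    exact PW_nonneg (WQ_nonneg (hp n).1 (hp n).2) _
  · filter_upwards [hev, eventually_le_log (-c), Filter.eventually_ge_atTop 1, hsmall]
      with n hpn hlc hn1 hsm
    have hn0 : (0:ℝ) < (n:ℝ) := by exact_mod_cast hn1
    have hp0 : 0 ≤ p n := (hp n).1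
    have hp1 : p n ≤ 1 := (hp n).2
    have hL0 : 0 ≤ Real.log n + c := by linarith
    have hpβ : p n ≤ (1 - β) * (Real.log n + c) / n := by
      refine hpn.trans ?_
      refine (div_le_div_iff_of_pos_right hn0).2 ?_
      exact mul_le_mul_of_nonneg_right (by linarith) hL0
    have hpsmall : p n ≤ β / (1 + β) := hpβ.trans hsm
    have hnp : p n * n ≤ (1 - β) * (Real.log n + c) := (le_div_iff₀ hn0).1 hpβ
    have hq0 : (0:ℝ) ≤ 1 - p n := by linarith
    have hq1 : 1 - p n ≤ 1 := by linarith
    have hqn1 : (1 - p n)^n ≤ 1 := pow_le_one₀ hq0 hq1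
    have hqn0 : (0:ℝ) ≤ (1 - p n)^n := pow_nonneg hq0 n
    have h1 : Real.exp (-((1+β) * p n)) ≤ 1 - p n := exp_neg_le_one_sub hβ0 hp0 hpsmall
    have h2 : Real.exp (-((1+β) * p n))^n ≤ (1 - p n)^n :=
      pow_le_pow_left₀ (le_of_lt (Real.exp_pos _)) h1 n
    have h4 : Real.exp (-((1 - β^2) * (Real.log n + c))) ≤ (1 - p n)^n := by
      refine le_trans ?_ h2
      rw [← Real.exp_nat_mul]
      refine Real.exp_le_exp.2 ?_
      have : (n:ℝ) * -((1+β) * p n) = -((1+β) * (p n * n)) := by ring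
      rw [this]
      nlinarith
    have h5 : Real.exp (γ * Real.log n - d) ≤ (n:ℝ) * (1 - p n)^n := by
      have e3 : Real.exp (γ * Real.log n - d)
          = Real.exp (Real.log n) * Real.exp (-((1 - β^2) * (Real.log n + c))) := by
        rw [← Real.exp_add]
        congr 1
        rw [hγ, hd]
        ring
      rw [e3, Real.exp_log hn0]
      exact mul_le_mul_of_nonneg_left h4 (le_of_lt hn0)
    -- probability chain
    have hP : bernoulliProb n m (p n) (fun M => Is3Directable M)
        ≤ (m:ℝ) * (1 - (1 - p n)^n)^n := by
      rw [bernoulliProb_eq]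
      calc PrQ n m (p n) (fun b => Is3Directable (fun k => toMat (b k)))
          ≤ PrQ n m (p n) (fun b => ∃ k, ∀ i, ∃ j, b k i j = true) :=
            PW_mono (WQ_nonneg hp0 hp1) (fun b h => directable_rows b h)
      _ ≤ ∑ k : Fin m, PrQ n m (p n) (fun b => ∀ i, ∃ j, b k i j = true) :=
            PW_exists_fintype (WQ_nonneg hp0 hp1) _
      _ = ∑ _k : Fin m, (1 - (1 - p n)^n)^n := by
            refine Finset.sum_congr rfl fun k _ => ?_
            rw [show PrQ n m (p n) (fun b => ∀ i, ∃ j, b k i j = true)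
                = PrM n (p n) (fun f => ∀ i, ∃ j, f i j = true) from
              PrQ_marginal hp0 hp1 k (fun f => ∀ i, ∃ j, f i j = true)]
            exact PrM_allRowsNonzero hp0 hp1
      _ = (m:ℝ) * (1 - (1 - p n)^n)^n := by
            rw [Finset.sum_const, Finset.card_univ, Fintype.card_fin, nsmul_eq_mul]
    refine hP.trans ?_
    rw [hU]
    dsimp only
    refine mul_le_mul_of_nonneg_left ?_ (Nat.cast_nonneg m)
    calc (1 - (1 - p n)^n)^n ≤ (Real.exp (-((1 - p n)^n)))^n :=
          pow_le_pow_left₀ (by linarith) (one_sub_le_exp_neg _) n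
    _ = Real.exp (-((n:ℝ) * (1 - p n)^n)) := by
          rw [← Real.exp_nat_mul]; congr 1; ring
    _ ≤ Real.exp (-(Real.exp (γ * Real.log n - d))) :=
          Real.exp_le_exp.2 (by linarith)

/-- Let `m ≥ 2`, `c ∈ ℝ`, `α > 0`, and `p n ∈ [0,1]`.
(i) If `p n ≥ (1+α)·(log n + c)/n` for all large `n`, then for some `C > 0` the probability
that `B_m(n, p n)` admits a 3-directing word of length at most `C·n·log n` tends to `1`.
(ii) If `p n ≤ (1−α)·(log n + c)/n` for all large `n`, then the probability that
`B_m(n, p n)` is 3-directable tends to `0`. -/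
theorem stmt9 (m : ℕ) (hm : 2 ≤ m) (c α : ℝ) (hα : 0 < α)
    (p : ℕ → ℝ) (hp : ∀ n, p n ∈ Set.Icc (0 : ℝ) 1) :
    ((∀ᶠ n : ℕ in atTop, (1 + α) * (Real.log n + c) / n ≤ p n) →
      ∃ C : ℝ, 0 < C ∧
        Tendsto (fun n : ℕ => bernoulliProb n m (p n)
            (fun M => ThreeDirWithin M (C * n * Real.log n))) atTop (nhds 1)) ∧
    ((∀ᶠ n : ℕ in atTop, p n ≤ (1 - α) * (Real.log n + c) / n) →
      Tendsto (fun n : ℕ => bernoulliProb n m (p n)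
          (fun M => Is3Directable M)) atTop (nhds 0)) := by
  constructor
  · intro hev
    exact ⟨1, one_pos, part_i m hm c α hα p hp hev⟩
  · intro hev
    exact part_ii m hm c α hα p hp hev
end

section
/- Let n ≥ 2 and let M = {Ī, Q_1, Q_2} be a set of n×n binary matrices, where Ī = I + I_{i,j} is a perturbed identity matrix (I the identity, j ≠ i) and Q_1, Q_2 are symmetric permutation matrices. If M is irreducible, then there exist a permutation π of {1,...,n} (with permutation matrix R) and an ordering (Q, Q') of (Q_1, Q_2) such that R·Q·Rᵀ and R·Q'·Rᵀ are the permutation matrices of permutations q and q' of the following form. If n is even, either: (Form A) q(1)=1, q(n)=n, q(i)=i+1 for even i with 2 ≤ i ≤ n−2, q(i)=i−1 for odd i with 3 ≤ i ≤ n−1, and q'(i)=i−1 for even i, q'(i)=i+1 for odd i; or (Form B) q(1)=n, q(n)=1, q(i)=i+1 for even i with 2 ≤ i ≤ n−2, q(i)=i−1 for odd i with 3 ≤ i ≤ n−1, and q'(i)=i−1 for even i, q'(i)=i+1 for odd i. If n is odd: q(1)=1, q(i)=i+1 for even i, q(i)=i−1 for odd i with 3 ≤ i ≤ n, and q'(n)=n,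 q'(i)=i−1 for even i, q'(i)=i+1 for odd i with 1 ≤ i ≤ n−2. -/
open Matrix

/-- The permutation matrix (over `ℕ`) of a permutation `σ`. -/
def permMatN {n : ℕ} (σ : Equiv.Perm (Fin n)) : Matrix (Fin n) (Fin n) ℕ :=
  Matrix.of fun i j => if σ i = j then 1 else 0

/-- The 0/1 matrix of a map on states `{1, ..., n}` described by `f : ℕ → ℕ`
(state `a` corresponds to the index `a.val + 1`): entry `(a, b)` is `1` iff
`f (a+1) = b+1` in the 1-indexed labels. -/
def matOfFun (n : ℕ) (f : ℕ → ℕ) : Matrix (Fin n) (Fin n) ℕ :=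
  Matrix.of fun a b => if f (a.val + 1) = b.val + 1 then 1 else 0

/-- Form A (for `n` even): `q(1)=1`, `q(n)=n`, `q(i)=i+1` for even `i`, `2 ≤ i ≤ n−2`,
`q(i)=i−1` for odd `i`, `3 ≤ i ≤ n−1`. -/
def formA (n : ℕ) : Matrix (Fin n) (Fin n) ℕ :=
  matOfFun n fun s => if s = 1 then 1 else if s = n then n
    else if s % 2 = 0 then s + 1 else s - 1

/-- Form B (for `n` even): `q(1)=n`, `q(n)=1`, `q(i)=i+1` for even `i`, `2 ≤ i ≤ n−2`,
`q(i)=i−1` for odd `i`, `3 ≤ i ≤ n−1`. -/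
def formB (n : ℕ) : Matrix (Fin n) (Fin n) ℕ :=
  matOfFun n fun s => if s = 1 then n else if s = n then 1
    else if s % 2 = 0 then s + 1 else s - 1

/-- The second letter's form (for `n` even): `q'(i)=i−1` for even `i`, `q'(i)=i+1`
for odd `i`. -/
def formEvenSnd (n : ℕ) : Matrix (Fin n) (Fin n) ℕ :=
  matOfFun n fun s => if s % 2 = 0 then s - 1 else s + 1

/-- First form for `n` odd: `q(1)=1`, `q(i)=i+1` for even `i`, `q(i)=i−1` for odd `i`,
`3 ≤ i ≤ n`. -/
def formOddFst (n : ℕ) : Matrix (Fin n) (Fin n) ℕ :=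
  matOfFun n fun s => if s = 1 then 1 else if s % 2 = 0 then s + 1 else s - 1

/-- Second form for `n` odd: `q'(n)=n`, `q'(i)=i−1` for even `i`, `q'(i)=i+1` for odd `i`,
`1 ≤ i ≤ n−2`. -/
def formOddSnd (n : ℕ) : Matrix (Fin n) (Fin n) ℕ :=
  matOfFun n fun s => if s = n then n else if s % 2 = 0 then s - 1 else s + 1

/-- Relabeling of the states of the matrix `Q` by the permutation `π`. -/
def relabel {n : ℕ} (π : Equiv.Perm (Fin n)) (Q : Matrix (Fin n) (Fin n) ℕ) :
    Matrix (Fin n) (Fin n) ℕ :=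
  permMatN π * Q * (permMatN π)ᵀ

section helpers
lemma permMat_mul {n : ℕ} (σ : Equiv.Perm (Fin n)) (A : Matrix (Fin n) (Fin n) ℕ) (a b : Fin n) :
    (permMatN σ * A) a b = A (σ a) b := by
  simp [Matrix.mul_apply, permMatN, Matrix.of_apply, ite_mul]

lemma mul_permMatT {n : ℕ} (σ : Equiv.Perm (Fin n)) (A : Matrix (Fin n) (Fin n) ℕ) (a b : Fin n) :
    (A * (permMatN σ)ᵀ) a b = A a (σ b) := by
  simp [Matrix.mul_apply, permMatN, Matrix.of_apply, Matrix.transpose_apply, mul_ite, eq_comm]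

lemma relabel_entry {n : ℕ} (π σ : Equiv.Perm (Fin n)) (a b : Fin n) :
    relabel π (permMatN σ) a b = if σ (π a) = π b then 1 else 0 := by
  rw [relabel, mul_permMatT, permMat_mul]; rfl

lemma form_eq {n : ℕ} (π σ : Equiv.Perm (Fin n)) (F : ℕ → ℕ)
    (h : ∀ a b : Fin n, σ (π a) = π b ↔ F (a.val + 1) = b.val + 1) :
    relabel π (permMatN σ) = matOfFun n F := by
  ext a b
  rw [relabel_entry, matOfFun, Matrix.of_apply]
  by_cases hc : σ (π a) = π b
  · rw [if_pos hc, if_pos ((h a b).mp hc)]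
  · rw [if_neg hc, if_neg (fun hf => hc ((h a b).mpr hf))]
end helpers

section walkdefs
def stepP {n : ℕ} (f g : Equiv.Perm (Fin n)) (k : ℕ) : Equiv.Perm (Fin n) :=
  if k % 2 = 0 then g else f

def walk {n : ℕ} (f g : Equiv.Perm (Fin n)) (v : Fin n) : ℕ → Fin n
  | 0 => v
  | k+1 => stepP f g k (walk f g v k)

lemma stepP_congr {n : ℕ} (f g : Equiv.Perm (Fin n)) {k m : ℕ} (h : k % 2 = m % 2) :
    stepP f g k = stepP f g m := by
  unfold stepP; rw [h]

lemma stepP_invol {n : ℕ} (f g : Equiv.Perm (Fin n))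
    (hf : ∀ x, f (f x) = x) (hg : ∀ x, g (g x) = x) (k : ℕ) (x : Fin n) :
    stepP f g k (stepP f g k x) = x := by
  unfold stepP; split <;> simp [hf, hg]

lemma walk_succ {n : ℕ} (f g : Equiv.Perm (Fin n)) (v : Fin n) (k : ℕ) :
    walk f g v (k+1) = stepP f g k (walk f g v k) := rfl

lemma walk_back {n : ℕ} (f g : Equiv.Perm (Fin n))
    (hf : ∀ x, f (f x) = x) (hg : ∀ x, g (g x) = x) (v : Fin n) (k : ℕ) :
    stepP f g k (walk f g v (k+1)) = walk f g v k := by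
  rw [walk_succ, stepP_invol f g hf hg]

lemma walk_g_even {n : ℕ} (f g : Equiv.Perm (Fin n)) (v : Fin n) {k : ℕ} (hk : k % 2 = 0) :
    g (walk f g v k) = walk f g v (k+1) := by
  rw [walk_succ]; unfold stepP; rw [if_pos hk]

lemma walk_f_odd {n : ℕ} (f g : Equiv.Perm (Fin n)) (v : Fin n) {k : ℕ} (hk : k % 2 = 1) :
    f (walk f g v k) = walk f g v (k+1) := by
  rw [walk_succ]; unfold stepP; rw [if_neg (by omega)]

lemma walk_g_even' {n : ℕ} (f g : Equiv.Perm (Fin n))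
    (hg : ∀ x, g (g x) = x) (v : Fin n) {k : ℕ} (hk : k % 2 = 0) :
    g (walk f g v (k+1)) = walk f g v k := by
  rw [← walk_g_even f g v hk, hg]

lemma walk_f_odd' {n : ℕ} (f g : Equiv.Perm (Fin n))
    (hf : ∀ x, f (f x) = x) (v : Fin n) {k : ℕ} (hk : k % 2 = 1) :
    f (walk f g v (k+1)) = walk f g v k := by
  rw [← walk_f_odd f g v hk, hf]

lemma walk_cases {n : ℕ} (f g : Equiv.Perm (Fin n))
    (hf : ∀ x, f (f x) = x) (hg : ∀ x, g (g x) = x) (v : Fin n) (b : ℕ)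
    (hb : ∃ a < b, walk f g v a = walk f g v b)
    (hmin : ∀ b' < b, ¬ ∃ a < b', walk f g v a = walk f g v b') :
    (∃ a, b = a + 1 ∧ stepP f g a (walk f g v a) = walk f g v a) ∨
    (b % 2 = 0 ∧ 2 ≤ b ∧ walk f g v (b-1) = f v ∧ walk f g v b = v) := by
  obtain ⟨a, hab, heq⟩ := hb
  set w := walk f g v with hw
  by_cases hba : b = a + 1
  · left
    exact ⟨a, hba, by rw [hba] at heq; rw [← walk_succ]; exact heq.symm⟩
  · have hb2 : a + 2 ≤ b := by omega
    have h1 : w (b-1) = stepP f g (b-1) (w b) := by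
      obtain ⟨c, hc⟩ : ∃ c, b = c + 1 := ⟨b-1, by omega⟩
      subst hc
      simpa using (walk_back f g hf hg v c).symm
    by_cases hpar : a % 2 = b % 2
    · by_cases ha0 : a = 0
      · right
        subst ha0
        have hbpar : b % 2 = 0 := by omega
        refine ⟨hbpar, by omega, ?_, heq.symm⟩
        rw [h1, ← heq]
        show stepP f g (b-1) (w 0) = f v
        unfold stepP
        rw [if_neg (by omega)]
        rfl
      · exfalso
        apply hmin (b-1) (by omega)
        refine ⟨a-1, by omega, ?_⟩
        have h2 : stepP f g (a-1) (w a) = w (a-1) := by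
          obtain ⟨c, hc⟩ : ∃ c, a = c + 1 := ⟨a-1, by omega⟩
          subst hc
          simpa using walk_back f g hf hg v c
        rw [h1, ← heq, stepP_congr f g (show (b-1) % 2 = (a-1) % 2 by omega), h2]
    · exfalso
      apply hmin (b-1) (by omega)
      refine ⟨a+1, by omega, ?_⟩
      rw [h1, ← heq, stepP_congr f g (show (b-1) % 2 = a % 2 by omega), ← walk_succ]

lemma walk_covers {n : ℕ} (f g : Equiv.Perm (Fin n))
    (hconn : ∀ a b, Relation.ReflTransGen (fun u v => f u = v ∨ g u = v) a b)
    (v : Fin n) (b : ℕ) (hb1 : 1 ≤ b)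
    (hmin : ∀ b' < b, ¬ ∃ a < b', walk f g v a = walk f g v b')
    (hcl : ∀ k < b, (∃ m < b, f (walk f g v k) = walk f g v m) ∧
        (∃ m < b, g (walk f g v k) = walk f g v m)) :
    b = n := by
  classical
  set w := walk f g v with hw
  set S : Finset (Fin n) := (Finset.range b).image w with hS
  have hmem : ∀ k, k < b → w k ∈ S := fun k hk =>
    Finset.mem_image.mpr ⟨k, Finset.mem_range.mpr hk, rfl⟩
  have hclS : ∀ x ∈ S, ∀ y, (f x = y ∨ g x = y) → y ∈ S := by
    intro x hx y hy
    obtain ⟨k, hk, hkx⟩ := Finset.mem_image.mp hx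
    rw [Finset.mem_range] at hk
    rcases hy with hy | hy
    · obtain ⟨m, hm, hfm⟩ := (hcl k hk).1
      rw [hkx] at hfm
      rw [← hy, hfm]
      exact hmem m hm
    · obtain ⟨m, hm, hfm⟩ := (hcl k hk).2
      rw [hkx] at hfm
      rw [← hy, hfm]
      exact hmem m hm
  have huniv : ∀ x : Fin n, x ∈ S := by
    intro x
    have h := hconn v x
    induction h with
    | refl => exact hmem 0 hb1
    | @tail u x hab hstep ih => exact hclS u ih x hstep
  have hSu : S = Finset.univ := Finset.eq_univ_iff_forall.mpr huniv
  have hinj : Set.InjOn w (Finset.range b : Finset ℕ) := by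
    intro x hx y hy hxy
    simp only [Finset.coe_range, Set.mem_Iio] at hx hy
    by_contra hne
    rcases Nat.lt_or_ge x y with h | h
    · exact hmin y hy ⟨x, h, hxy⟩
    · exact hmin x hx ⟨y, by omega, hxy.symm⟩
  have h1 : S.card = b := by
    rw [hS, Finset.card_image_of_injOn hinj, Finset.card_range]
  rw [hSu, Finset.card_univ, Fintype.card_fin] at h1
  omega
end walkdefs

/-- Path case: `f` has a fixed point. -/
lemma path_case {n : ℕ} (hn : 2 ≤ n) (f g : Equiv.Perm (Fin n))
    (hf : ∀ x, f (f x) = x) (hg : ∀ x, g (g x) = x)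
    (hconn : ∀ a b, Relation.ReflTransGen (fun u v => f u = v ∨ g u = v) a b)
    (v : Fin n) (hv : f v = v) :
    ∃ π : Equiv.Perm (Fin n),
      (Even n → relabel π (permMatN f) = formA n ∧ relabel π (permMatN g) = formEvenSnd n) ∧
      (Odd n → relabel π (permMatN f) = formOddFst n ∧ relabel π (permMatN g) = formOddSnd n) := by
  classical
  set w := walk f g v with hwdef
  have hex : ∃ b, ∃ a < b, w a = w b := by
    obtain ⟨x, y, hne, hxy⟩ := Finite.exists_ne_map_eq_of_infinite w
    rcases Nat.lt_or_ge x y with h | h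
    · exact ⟨y, x, h, hxy⟩
    · exact ⟨x, y, by omega, hxy.symm⟩
  set b := Nat.find hex with hbdef
  have hb : ∃ a < b, w a = w b := Nat.find_spec hex
  have hmin : ∀ b' < b, ¬ ∃ a < b', w a = w b' := fun b' h => Nat.find_min hex h
  rcases walk_cases f g hf hg v b hb hmin with ⟨a, hba, hfix⟩ | ⟨hbp, hb2, hwb, hwbv⟩
  swap
  · exfalso
    apply hmin (b-1) (by omega)
    refine ⟨0, by omega, ?_⟩
    show walk f g v 0 = walk f g v (b-1)
    rw [hwb, hv]
    rfl
  · -- b = a + 1, stepP a fixes w a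
    have ha1 : 1 ≤ a := by
      by_contra h0
      have ha0 : a = 0 := by omega
      subst ha0
      have hgv : g v = v := by
        have : stepP f g 0 v = v := hfix
        simpa [stepP] using this
      have hall : ∀ x : Fin n, Relation.ReflTransGen (fun u y => f u = y ∨ g u = y) v x → x = v := by
        intro x h
        induction h with
        | refl => rfl
        | @tail u x hab hstep ih =>
          subst ih
          rcases hstep with h | h
          · rw [← h, hv]
          · rw [← h, hgv]
      have e0 := hall ⟨0, by omega⟩ (hconn v ⟨0, by omega⟩)
      have e1 := hall ⟨1, by omega⟩ (hconn v ⟨1, by omega⟩)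
      replace e0 := e0.trans e1.symm
      exact absurd (congrArg Fin.val e0) (by simp)
    have hcl : ∀ k < b, (∃ m < b, f (w k) = w m) ∧ (∃ m < b, g (w k) = w m) := by
      intro k hk
      constructor
      · by_cases hk0 : k = 0
        · subst hk0
          exact ⟨0, by omega, hv⟩
        · by_cases hkp : k % 2 = 1
          · by_cases hka : k = a
            · refine ⟨k, by omega, ?_⟩
              subst hka
              have : stepP f g k = f := by unfold stepP; rw [if_neg (by omega)]
              rw [← this]
              exact hfix
            · exact ⟨k+1, by omega, walk_f_odd f g v hkp⟩
          · obtain ⟨c, hc⟩ : ∃ c, k = c + 1 := ⟨k-1, by omega⟩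
            refine ⟨c, by omega, ?_⟩
            rw [hc]
            exact walk_f_odd' f g hf v (show c % 2 = 1 by omega)
      · by_cases hkp : k % 2 = 0
        · by_cases hka : k = a
          · refine ⟨k, by omega, ?_⟩
            subst hka
            have : stepP f g k = g := by unfold stepP; rw [if_pos hkp]
            rw [← this]
            exact hfix
          · exact ⟨k+1, by omega, walk_g_even f g v hkp⟩
        · obtain ⟨c, hc⟩ : ∃ c, k = c + 1 := ⟨k-1, by omega⟩
          refine ⟨c, by omega, ?_⟩
          rw [hc]
          exact walk_g_even' f g hg v (show c % 2 = 0 by omega)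
    have hbn : b = n := walk_covers f g hconn v b (by omega) hmin hcl
    have han : a = n - 1 := by omega
    have winj : ∀ x y, x < n → y < n → w x = w y → x = y := by
      intro x y hx hy hxy
      by_contra hne
      rcases Nat.lt_or_ge x y with h | h
      · exact hmin y (by omega) ⟨x, h, hxy⟩
      · exact hmin x (by omega) ⟨y, by omega, hxy.symm⟩
    have hinj : Function.Injective (fun x : Fin n => w x.val) := by
      intro x y h
      exact Fin.ext (winj x.val y.val x.isLt y.isLt h)
    let π : Equiv.Perm (Fin n) := Equiv.ofBijective _ (Finite.injective_iff_bijective.mp hinj)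
    have hπ : ∀ x : Fin n, π x = w x.val := fun x => rfl
    have keyiff : ∀ (σ : Equiv.Perm (Fin n)) (x y : Fin n) (t : ℕ), t < n →
        σ (w x.val) = w t → (σ (π x) = π y ↔ t = y.val) := by
      intro σ x y t ht hσ
      rw [hπ, hπ, hσ]
      constructor
      · intro h; exact winj t y.val ht y.isLt h
      · intro h; rw [h]
    have hv0 : f (w 0) = w 0 := hv
    refine ⟨π, ?_, ?_⟩
    · -- n even
      intro hne
      have hne2 : n % 2 = 0 := Nat.even_iff.mp hne
      have hfe : f (w (n-1)) = w (n-1) := by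
        have hsa : stepP f g a = f := by unfold stepP; rw [if_neg (by omega)]
        rw [← han, ← hsa]
        exact hfix
      constructor
      · rw [formA]
        apply form_eq
        intro x y
        have hx := x.isLt; have hy := y.isLt
        by_cases h0 : x.val = 0
        · rw [keyiff f x y 0 (by omega) (by rw [h0]; exact hv0)]
          split_ifs <;> omega
        · by_cases h1 : x.val = n-1
          · rw [keyiff f x y (n-1) (by omega) (by rw [h1]; exact hfe)]
            split_ifs <;> omega
          · by_cases hp : x.val % 2 = 1
            · rw [keyiff f x y (x.val+1) (by omega) (walk_f_odd f g v hp)]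
              split_ifs <;> omega
            · obtain ⟨c, hc⟩ : ∃ c, x.val = c + 1 := ⟨x.val-1, by omega⟩
              rw [keyiff f x y c (by omega)
                (by rw [hc]; exact walk_f_odd' f g hf v (show c % 2 = 1 by omega))]
              split_ifs <;> omega
      · rw [formEvenSnd]
        apply form_eq
        intro x y
        have hx := x.isLt; have hy := y.isLt
        by_cases hp : x.val % 2 = 0
        · rw [keyiff g x y (x.val+1) (by omega) (walk_g_even f g v hp)]
          split_ifs <;> omega
        · obtain ⟨c, hc⟩ : ∃ c, x.val = c + 1 := ⟨x.val-1, by omega⟩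
          rw [keyiff g x y c (by omega)
            (by rw [hc]; exact walk_g_even' f g hg v (show c % 2 = 0 by omega))]
          split_ifs <;> omega
    · -- n odd
      intro hno
      have hno2 : n % 2 = 1 := Nat.odd_iff.mp hno
      have hge : g (w (n-1)) = w (n-1) := by
        have hsa : stepP f g a = g := by unfold stepP; rw [if_pos (by omega)]
        rw [← han, ← hsa]
        exact hfix
      constructor
      · rw [formOddFst]
        apply form_eq
        intro x y
        have hx := x.isLt; have hy := y.isLt
        by_cases h0 : x.val = 0
        · rw [keyiff f x y 0 (by omega) (by rw [h0]; exact hv0)]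
          split_ifs <;> omega
        · by_cases hp : x.val % 2 = 1
          · rw [keyiff f x y (x.val+1) (by omega) (walk_f_odd f g v hp)]
            split_ifs <;> omega
          · obtain ⟨c, hc⟩ : ∃ c, x.val = c + 1 := ⟨x.val-1, by omega⟩
            rw [keyiff f x y c (by omega)
              (by rw [hc]; exact walk_f_odd' f g hf v (show c % 2 = 1 by omega))]
            split_ifs <;> omega
      · rw [formOddSnd]
        apply form_eq
        intro x y
        have hx := x.isLt; have hy := y.isLt
        by_cases h1 : x.val = n-1
        · rw [keyiff g x y (n-1) (by omega) (by rw [h1]; exact hge)]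
          split_ifs <;> omega
        · by_cases hp : x.val % 2 = 0
          · rw [keyiff g x y (x.val+1) (by omega) (walk_g_even f g v hp)]
            split_ifs <;> omega
          · obtain ⟨c, hc⟩ : ∃ c, x.val = c + 1 := ⟨x.val-1, by omega⟩
            rw [keyiff g x y c (by omega)
              (by rw [hc]; exact walk_g_even' f g hg v (show c % 2 = 0 by omega))]
            split_ifs <;> omega

/-- Cycle case: neither `f` nor `g` has a fixed point. -/
lemma cycle_case {n : ℕ} (hn : 2 ≤ n) (f g : Equiv.Perm (Fin n))
    (hf : ∀ x, f (f x) = x) (hg : ∀ x, g (g x) = x)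
    (hconn : ∀ a b, Relation.ReflTransGen (fun u v => f u = v ∨ g u = v) a b)
    (hnf : ∀ x, f x ≠ x) (hng : ∀ x, g x ≠ x) :
    n % 2 = 0 ∧ ∃ π : Equiv.Perm (Fin n),
      relabel π (permMatN f) = formB n ∧ relabel π (permMatN g) = formEvenSnd n := by
  classical
  set v : Fin n := ⟨0, by omega⟩ with hvdef
  set w := walk f g v with hwdef
  have hex : ∃ b, ∃ a < b, w a = w b := by
    obtain ⟨x, y, hne, hxy⟩ := Finite.exists_ne_map_eq_of_infinite w
    rcases Nat.lt_or_ge x y with h | h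
    · exact ⟨y, x, h, hxy⟩
    · exact ⟨x, y, by omega, hxy.symm⟩
  set b := Nat.find hex with hbdef
  have hb : ∃ a < b, w a = w b := Nat.find_spec hex
  have hmin : ∀ b' < b, ¬ ∃ a < b', w a = w b' := fun b' h => Nat.find_min hex h
  rcases walk_cases f g hf hg v b hb hmin with ⟨a, hba, hfix⟩ | ⟨hbp, hb2, hwb, hwbv⟩
  · exfalso
    by_cases hap : a % 2 = 0
    · have hsa : stepP f g a = g := by unfold stepP; rw [if_pos hap]
      rw [hsa] at hfix
      exact hng _ hfix
    · have hsa : stepP f g a = f := by unfold stepP; rw [if_neg hap]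
      rw [hsa] at hfix
      exact hnf _ hfix
  · have hcl : ∀ k < b, (∃ m < b, f (w k) = w m) ∧ (∃ m < b, g (w k) = w m) := by
      intro k hk
      constructor
      · by_cases hk0 : k = 0
        · subst hk0
          exact ⟨b-1, by omega, hwb.symm⟩
        · by_cases hkp : k % 2 = 1
          · by_cases hkb : k = b - 1
            · refine ⟨0, by omega, ?_⟩
              subst hkb
              show f (walk f g v (b-1)) = walk f g v 0
              rw [hwb]
              exact hf v
            · exact ⟨k+1, by omega, walk_f_odd f g v hkp⟩
          · obtain ⟨c, hc⟩ : ∃ c, k = c + 1 := ⟨k-1, by omega⟩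
            refine ⟨c, by omega, ?_⟩
            rw [hc]
            exact walk_f_odd' f g hf v (show c % 2 = 1 by omega)
      · by_cases hkp : k % 2 = 0
        · exact ⟨k+1, by omega, walk_g_even f g v hkp⟩
        · obtain ⟨c, hc⟩ : ∃ c, k = c + 1 := ⟨k-1, by omega⟩
          refine ⟨c, by omega, ?_⟩
          rw [hc]
          exact walk_g_even' f g hg v (show c % 2 = 0 by omega)
    have hbn : b = n := walk_covers f g hconn v b (by omega) hmin hcl
    have winj : ∀ x y, x < n → y < n → w x = w y → x = y := by
      intro x y hx hy hxy
      by_contra hne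
      rcases Nat.lt_or_ge x y with h | h
      · exact hmin y (by omega) ⟨x, h, hxy⟩
      · exact hmin x (by omega) ⟨y, by omega, hxy.symm⟩
    have hinj : Function.Injective (fun x : Fin n => w x.val) := by
      intro x y h
      exact Fin.ext (winj x.val y.val x.isLt y.isLt h)
    let π : Equiv.Perm (Fin n) := Equiv.ofBijective _ (Finite.injective_iff_bijective.mp hinj)
    have hπ : ∀ x : Fin n, π x = w x.val := fun x => rfl
    have keyiff : ∀ (σ : Equiv.Perm (Fin n)) (x y : Fin n) (t : ℕ), t < n →
        σ (w x.val) = w t → (σ (π x) = π y ↔ t = y.val) := by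
      intro σ x y t ht hσ
      rw [hπ, hπ, hσ]
      constructor
      · intro h; exact winj t y.val ht y.isLt h
      · intro h; rw [h]
    have hne2 : n % 2 = 0 := by omega
    have hwb' : walk f g v (n-1) = f v := by
      have h' := hwb
      rwa [hbn] at h'
    have hf0 : f (w 0) = w (n-1) := hwb'.symm
    have hfn : f (w (n-1)) = w 0 := by
      show f (walk f g v (n-1)) = walk f g v 0
      rw [hwb']
      exact hf v
    refine ⟨hne2, π, ?_, ?_⟩
    · rw [formB]
      apply form_eq
      intro x y
      have hx := x.isLt; have hy := y.isLt
      by_cases h0 : x.val = 0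
      · rw [keyiff f x y (n-1) (by omega) (by rw [h0]; exact hf0)]
        split_ifs <;> omega
      · by_cases h1 : x.val = n-1
        · rw [keyiff f x y 0 (by omega) (by rw [h1]; exact hfn)]
          split_ifs <;> omega
        · by_cases hp : x.val % 2 = 1
          · rw [keyiff f x y (x.val+1) (by omega) (walk_f_odd f g v hp)]
            split_ifs <;> omega
          · obtain ⟨c, hc⟩ : ∃ c, x.val = c + 1 := ⟨x.val-1, by omega⟩
            rw [keyiff f x y c (by omega)
              (by rw [hc]; exact walk_f_odd' f g hf v (show c % 2 = 1 by omega))]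
            split_ifs <;> omega
    · rw [formEvenSnd]
      apply form_eq
      intro x y
      have hx := x.isLt; have hy := y.isLt
      by_cases hp : x.val % 2 = 0
      · rw [keyiff g x y (x.val+1) (by omega) (walk_g_even f g v hp)]
        split_ifs <;> omega
      · obtain ⟨c, hc⟩ : ∃ c, x.val = c + 1 := ⟨x.val-1, by omega⟩
        rw [keyiff g x y c (by omega)
          (by rw [hc]; exact walk_g_even' f g hg v (show c % 2 = 0 by omega))]
        split_ifs <;> omega

lemma invol_of_symm {n : ℕ} (σ : Equiv.Perm (Fin n)) (h : (permMatN σ)ᵀ = permMatN σ) :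
    ∀ x, σ (σ x) = x := by
  intro x
  have := congrFun (congrFun h (σ x)) x
  simp [permMatN, Matrix.transpose_apply, Matrix.of_apply] at this
  by_contra hc
  exact hc this

lemma rtg_symm {α} {r : α → α → Prop} (hr : ∀ x y, r x y → r y x) {a b : α}
    (h : Relation.ReflTransGen r a b) : Relation.ReflTransGen r b a := by
  induction h with
  | refl => exact Relation.ReflTransGen.refl
  | tail hab hbc ih => exact Relation.ReflTransGen.head (hr _ _ hbc) ih

lemma conn_reduce {n : ℕ} (i j : Fin n) (f g : Equiv.Perm (Fin n))
    (hf : ∀ x, f (f x) = x) (hg : ∀ x, g (g x) = x)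
    (hirr : ∀ a b : Fin n, Relation.ReflTransGen
      (fun u v => 0 < (((1 : Matrix (Fin n) (Fin n) ℕ) + Matrix.single i j 1
        + permMatN f + permMatN g : Matrix (Fin n) (Fin n) ℕ)) u v) a b) :
    ∀ a b : Fin n, Relation.ReflTransGen (fun u v => f u = v ∨ g u = v) a b := by
  set r : Fin n → Fin n → Prop := fun u v => f u = v ∨ g u = v with hr
  have hrsymm : ∀ x y, r x y → r y x := by
    rintro x y (h | h)
    · exact Or.inl (by rw [← h, hf])
    · exact Or.inr (by rw [← h, hg])
  set R := Relation.ReflTransGen r with hR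
  have hpos : ∀ u v : Fin n, 0 < (((1 : Matrix (Fin n) (Fin n) ℕ) + Matrix.single i j 1
      + permMatN f + permMatN g : Matrix (Fin n) (Fin n) ℕ)) u v →
      u = v ∨ (u = i ∧ v = j) ∨ r u v := by
    intro u v h
    simp only [Matrix.add_apply, Matrix.one_apply, Matrix.single, Matrix.of_apply,
      permMatN] at h
    by_contra hc
    push_neg at hc
    obtain ⟨h1, h2, h3⟩ := hc
    rw [if_neg h1, if_neg (by tauto), if_neg (fun e => h3 (Or.inl e)),
      if_neg (fun e => h3 (Or.inr e))] at h
    simp at h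
  have key : ∀ a b : Fin n, Relation.ReflTransGen
      (fun u v => 0 < (((1 : Matrix (Fin n) (Fin n) ℕ) + Matrix.single i j 1
        + permMatN f + permMatN g : Matrix (Fin n) (Fin n) ℕ)) u v) a b →
      R a b ∨ (R a i ∧ R j b) := by
    intro a b h
    induction h with
    | refl => exact Or.inl Relation.ReflTransGen.refl
    | @tail u v huv hstep ih =>
      rcases hpos _ _ hstep with h1 | ⟨h1, h2⟩ | h1
      · subst h1; exact ih
      · subst h1; subst h2
        rcases ih with h | ⟨h, _⟩
        · exact Or.inr ⟨h, Relation.ReflTransGen.refl⟩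
        · exact Or.inr ⟨h, Relation.ReflTransGen.refl⟩
      · rcases ih with h | ⟨h, h'⟩
        · exact Or.inl (h.tail h1)
        · exact Or.inr ⟨h, h'.tail h1⟩
  have hji : R j i := by
    rcases key j i (hirr j i) with h | ⟨_, h⟩
    · exact h
    · exact h
  intro a b
  rcases key a b (hirr a b) with h | ⟨h1, h2⟩
  · exact h
  · exact (h1.trans (rtg_symm hrsymm hji)).trans h2

lemma core {n : ℕ} (hn : 2 ≤ n) (f g : Equiv.Perm (Fin n))
    (hf : ∀ x, f (f x) = x) (hg : ∀ x, g (g x) = x)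
    (hconn : ∀ a b, Relation.ReflTransGen (fun u v => f u = v ∨ g u = v) a b)
    (hstart : (∃ v, f v = v) ∨ ((∀ x, f x ≠ x) ∧ (∀ x, g x ≠ x))) :
    ∃ π : Equiv.Perm (Fin n),
      (Even n → (relabel π (permMatN f) = formA n ∨ relabel π (permMatN f) = formB n)
        ∧ relabel π (permMatN g) = formEvenSnd n) ∧
      (Odd n → relabel π (permMatN f) = formOddFst n ∧ relabel π (permMatN g) = formOddSnd n) := by
  rcases hstart with ⟨v, hv⟩ | ⟨hnf, hng⟩
  · obtain ⟨π, hE, hO⟩ := path_case hn f g hf hg hconn v hv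
    exact ⟨π, fun he => ⟨Or.inl (hE he).1, (hE he).2⟩, hO⟩
  · obtain ⟨hpar, π, h1, h2⟩ := cycle_case hn f g hf hg hconn hnf hng
    exact ⟨π, fun _ => ⟨Or.inr h1, h2⟩,
      fun ho => absurd (Nat.odd_iff.mp ho) (by omega)⟩


/-- Let `n ≥ 2` and `M = {Ī, Q₁, Q₂}` with `Ī = I + I_{i,j}` (`j ≠ i`) a perturbed
identity and `Q₁, Q₂` symmetric permutation matrices.  If `M` is irreducible then, up to a
relabeling of the states and an ordering of `(Q₁, Q₂)`, the two permutation matrices have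
the canonical forms described in the paper: for `n` even, form A or form B together with
the standard "second" form; for `n` odd, the two odd forms. -/
theorem stmt14 (n : ℕ) (hn : 2 ≤ n) (i j : Fin n) (hij : i ≠ j)
    (Q₁ Q₂ : Matrix (Fin n) (Fin n) ℕ)
    (hQ₁ : ∃ σ : Equiv.Perm (Fin n), Q₁ = permMatN σ) (hQ₁s : Q₁ᵀ = Q₁)
    (hQ₂ : ∃ σ : Equiv.Perm (Fin n), Q₂ = permMatN σ) (hQ₂s : Q₂ᵀ = Q₂)
    (hirr : ∀ a b : Fin n, Relation.ReflTransGen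
      (fun u v => 0 < (((1 : Matrix (Fin n) (Fin n) ℕ) + Matrix.single i j 1
        + Q₁ + Q₂ : Matrix (Fin n) (Fin n) ℕ)) u v) a b) :
    (Even n → ∃ π : Equiv.Perm (Fin n), ∃ F ∈ ({formA n, formB n} :
        Set (Matrix (Fin n) (Fin n) ℕ)),
      (relabel π Q₁ = F ∧ relabel π Q₂ = formEvenSnd n) ∨
      (relabel π Q₂ = F ∧ relabel π Q₁ = formEvenSnd n)) ∧
    (Odd n → ∃ π : Equiv.Perm (Fin n),
      (relabel π Q₁ = formOddFst n ∧ relabel π Q₂ = formOddSnd n) ∨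
      (relabel π Q₂ = formOddFst n ∧ relabel π Q₁ = formOddSnd n)) := by
  obtain ⟨σ₁, rfl⟩ := hQ₁
  obtain ⟨σ₂, rfl⟩ := hQ₂
  have hf := invol_of_symm σ₁ hQ₁s
  have hg := invol_of_symm σ₂ hQ₂s
  have hconn := conn_reduce i j σ₁ σ₂ hf hg hirr
  by_cases h1 : ∃ v, σ₁ v = v
  · obtain ⟨π, hE, hO⟩ := core hn σ₁ σ₂ hf hg hconn (Or.inl h1)
    constructor
    · intro he
      obtain ⟨hAB, hsnd⟩ := hE he
      rcases hAB with h | h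
      · exact ⟨π, formA n, Set.mem_insert _ _, Or.inl ⟨h, hsnd⟩⟩
      · exact ⟨π, formB n, Set.mem_insert_iff.mpr (Or.inr rfl), Or.inl ⟨h, hsnd⟩⟩
    · intro ho
      exact ⟨π, Or.inl (hO ho)⟩
  · have hconn' : ∀ a b, Relation.ReflTransGen (fun u v => σ₂ u = v ∨ σ₁ u = v) a b :=
      fun a b => Relation.ReflTransGen.mono (fun u v (h : σ₁ u = v ∨ σ₂ u = v) => h.symm) a b (hconn a b)
    by_cases h2 : ∃ v, σ₂ v = v
    · obtain ⟨π, hE, hO⟩ := core hn σ₂ σ₁ hg hf hconn' (Or.inl h2)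
      constructor
      · intro he
        obtain ⟨hAB, hsnd⟩ := hE he
        rcases hAB with h | h
        · exact ⟨π, formA n, Set.mem_insert _ _, Or.inr ⟨h, hsnd⟩⟩
        · exact ⟨π, formB n, Set.mem_insert_iff.mpr (Or.inr rfl), Or.inr ⟨h, hsnd⟩⟩
      · intro ho
        exact ⟨π, Or.inr (hO ho)⟩
    · push_neg at h1 h2
      obtain ⟨π, hE, hO⟩ := core hn σ₁ σ₂ hf hg hconn (Or.inr ⟨h1, h2⟩)
      constructor
      · intro he
        obtain ⟨hAB, hsnd⟩ := hE he
        rcases hAB with h | h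
        · exact ⟨π, formA n, Set.mem_insert _ _, Or.inl ⟨h, hsnd⟩⟩
        · exact ⟨π, formB n, Set.mem_insert_iff.mpr (Or.inr rfl), Or.inl ⟨h, hsnd⟩⟩
      · intro ho
        exact ⟨π, Or.inl (hO ho)⟩
end

section
/- Let n ≥ 4 be even. Let q_1 be the permutation of {1,...,n} with q_1(1)=n, q_1(n)=1, q_1(i)=i+1 for even i with 2 ≤ i ≤ n−2, q_1(i)=i−1 for odd i with 3 ≤ i ≤ n−1, and let q_2 be the permutation with q_2(i)=i−1 for even i and q_2(i)=i+1 for odd i; let Q_1, Q_2 be their permutation matrices. Then for all i, j ∈ {1,...,n} with i ≠ j, the set {I + I_{i,j}, Q_1, Q_2} (I the identity matrix) is not primitive. -/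
open Matrix

/-- The permutation matrix of `q₁` with `q₁(1)=n`, `q₁(n)=1`, `q₁(i)=i+1` for even `i`
with `2 ≤ i ≤ n−2`, `q₁(i)=i−1` for odd `i` with `3 ≤ i ≤ n−1`. -/
def Q1mat (n : ℕ) : Matrix (Fin n) (Fin n) ℕ :=
  matOfFun n fun s => if s = 1 then n else if s = n then 1
    else if s % 2 = 0 then s + 1 else s - 1

/-- The permutation matrix of `q₂` with `q₂(i)=i−1` for even `i`, `q₂(i)=i+1` for odd
`i`. -/
def Q2mat (n : ℕ) : Matrix (Fin n) (Fin n) ℕ :=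
  matOfFun n fun s => if s % 2 = 0 then s - 1 else s + 1

/-- A set `{M 0, ..., M (m-1)}` of `n × n` matrices over `ℕ` is primitive if some nonempty
product of its elements (repetitions allowed) has all entries positive. -/
def IsPrimitive {n m : ℕ} (M : Fin m → Matrix (Fin n) (Fin n) ℕ) : Prop :=
  ∃ w : List (Fin m), w ≠ [] ∧ ∀ i j, 0 < (w.map M).prod i j

/-- Key obstruction: if there is a coloring `C` of the states and for each letter a
map `σ ℓ` on colors such that every nonzero entry `(a, b)` of `M ℓ` satisfies
`C b = σ ℓ (C a)`, and not all states have the same color, then `M` is not primitive. -/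
lemma key_not_primitive {n m : ℕ} {M : Fin m → Matrix (Fin n) (Fin n) ℕ} {K : Type}
    (C : Fin n → K) (σ : Fin m → K → K)
    (hc : ∀ ℓ a b, 0 < M ℓ a b → C b = σ ℓ (C a))
    (b b' : Fin n) (hbb : C b ≠ C b') : ¬ IsPrimitive M := by
  rintro ⟨w, -, hpos⟩
  have main : ∀ w : List (Fin m), ∀ a c : Fin n, 0 < (w.map M).prod a c →
      C c = w.foldl (fun k ℓ => σ ℓ k) (C a) := by
    intro w
    induction w with
    | nil =>
      intro a c h
      simp only [List.map_nil, List.prod_nil] at h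
      rw [Matrix.one_apply] at h
      split_ifs at h with hac
      · rw [hac]; rfl
      · exact absurd h (lt_irrefl 0)
    | cons ℓ t ih =>
      intro a c h
      simp only [List.map_cons, List.prod_cons] at h
      rw [Matrix.mul_apply] at h
      obtain ⟨d, -, hd⟩ := Finset.exists_ne_zero_of_sum_ne_zero h.ne'
      rw [mul_ne_zero_iff] at hd
      have h1 := hc ℓ a d (Nat.pos_of_ne_zero hd.1)
      have h2 := ih d c (Nat.pos_of_ne_zero hd.2)
      rw [List.foldl_cons, h2, h1]
  have e1 := main w b b (hpos b b)
  have e2 := main w b b' (hpos b b')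
  exact hbb (e1.trans e2.symm)

/-- For `n ≥ 4` even and any `i ≠ j`, the set `{I + I_{i,j}, Q₁, Q₂}` (with `Q₁, Q₂` of
the second form (saus2) above) is never primitive. -/
theorem stmt15 (n : ℕ) (hn : 4 ≤ n) (heven : Even n) (i j : Fin n) (hij : i ≠ j) :
    ¬ IsPrimitive
      ![(1 : Matrix (Fin n) (Fin n) ℕ) + Matrix.single i j 1,
        Q1mat n, Q2mat n] := by
  have hne : n % 2 = 0 := Nat.even_iff.mp heven
  haveI : NeZero n := ⟨by omega⟩
  -- extract the defining equations of Q1 / Q2 from positivity of an entry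
  have hq1 : ∀ a b : Fin n, 0 < Q1mat n a b →
      (if a.val + 1 = 1 then n else if a.val + 1 = n then 1
        else if (a.val + 1) % 2 = 0 then a.val + 1 + 1 else a.val + 1 - 1) = b.val + 1 := by
    intro a b h
    simp only [Q1mat, matOfFun, Matrix.of_apply] at h
    by_contra hc
    rw [if_neg hc] at h
    exact absurd h (lt_irrefl 0)
  have hq2 : ∀ a b : Fin n, 0 < Q2mat n a b →
      (if (a.val + 1) % 2 = 0 then a.val + 1 - 1 else a.val + 1 + 1) = b.val + 1 := by
    intro a b h
    simp only [Q2mat, matOfFun, Matrix.of_apply] at h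
    by_contra hc
    rw [if_neg hc] at h
    exact absurd h (lt_irrefl 0)
  have hstd : ∀ a b : Fin n,
      0 < (((1 : Matrix (Fin n) (Fin n) ℕ) + Matrix.single i j 1 : Matrix (Fin n) (Fin n) ℕ)) a b →
      a = b ∨ (a = i ∧ b = j) := by
    intro a b h
    rw [Matrix.add_apply, Matrix.one_apply] at h
    simp only [Matrix.single, Matrix.of_apply] at h
    split_ifs at h with h1 h2 h2
    · exact Or.inl h1
    · exact Or.inl h1
    · exact Or.inr ⟨h2.1.symm, h2.2.symm⟩
    · exact absurd h (lt_irrefl 0)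
  by_cases hpar : i.val % 2 = j.val % 2
  · -- same parity: color by parity
    set C : Fin n → ZMod n := fun a => ((a.val % 2 : ℕ) : ZMod n) with hC
    have flip : ∀ a b : Fin n, b.val % 2 = 1 - a.val % 2 → C b = 1 - C a := by
      intro a b hb
      simp only [hC]
      rcases Nat.eq_zero_or_pos (a.val % 2) with h0 | h0
      · rw [h0] at hb ⊢; rw [hb]; norm_num
      · have h1 : a.val % 2 = 1 := by omega
        rw [h1] at hb ⊢; rw [hb]; norm_num
    have hA : ∀ a b : Fin n,
        0 < (((1 : Matrix (Fin n) (Fin n) ℕ) + Matrix.single i j 1 : Matrix (Fin n) (Fin n) ℕ)) a b →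
        C b = C a := by
      intro a b h
      rcases hstd a b h with h1 | ⟨h1, h2⟩
      · rw [h1]
      · subst h1; subst h2
        simp only [hC, hpar]
    have hQ1 : ∀ a b : Fin n, 0 < Q1mat n a b → C b = 1 - C a := by
      intro a b h
      have hcond := hq1 a b h
      have ha := a.isLt; have hb := b.isLt
      split_ifs at hcond with h1 h2 h3 <;> exact flip a b (by omega)
    have hQ2 : ∀ a b : Fin n, 0 < Q2mat n a b → C b = 1 - C a := by
      intro a b h
      have hcond := hq2 a b h
      have ha := a.isLt; have hb := b.isLt
      split_ifs at hcond with h1 <;> exact flip a b (by omega)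
    have c0 : C ⟨0, by omega⟩ = ((0 : ℕ) : ZMod n) := by simp [hC]
    have c1 : C ⟨1, by omega⟩ = ((1 : ℕ) : ZMod n) := by simp [hC]
    refine key_not_primitive C ![id, fun u => 1 - u, fun u => 1 - u]
      ?_ ⟨0, by omega⟩ ⟨1, by omega⟩ ?_
    · intro ℓ a b h
      fin_cases ℓ
      · exact hA a b h
      · exact hQ1 a b h
      · exact hQ2 a b h
    · rw [c0, c1]
      intro hcon
      have h1 : ((1 : ℕ) : ZMod n).val = 1 := ZMod.val_cast_of_lt (by omega)
      have h0 : ((0 : ℕ) : ZMod n).val = 0 := ZMod.val_cast_of_lt (by omega)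
      rw [hcon] at h0
      omega
  · -- opposite parity
    set C : Fin n → ZMod n := fun a => if a.val % 2 = 0 then (a.val : ZMod n)
        else (i.val : ZMod n) + (j.val : ZMod n) - (a.val : ZMod n) with hC
    have hA : ∀ a b : Fin n,
        0 < (((1 : Matrix (Fin n) (Fin n) ℕ) + Matrix.single i j 1 : Matrix (Fin n) (Fin n) ℕ)) a b →
        C b = C a := by
      intro a b h
      rcases hstd a b h with h1 | ⟨h1, h2⟩
      · rw [h1]
      · rw [h1, h2]
        simp only [hC]
        rcases Nat.eq_zero_or_pos (i.val % 2) with h0 | h0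
        · have hj : ¬ (j.val % 2 = 0) := by omega
          rw [if_pos h0, if_neg hj]
          ring
        · have h0' : ¬ (i.val % 2 = 0) := by omega
          have hj : j.val % 2 = 0 := by omega
          rw [if_neg h0', if_pos hj]
          ring
    have hQ1 : ∀ a b : Fin n, 0 < Q1mat n a b →
        C b = (i.val : ZMod n) + (j.val : ZMod n) + 1 - C a := by
      intro a b h
      have hcond := hq1 a b h
      have ha := a.isLt; have hb := b.isLt
      simp only [hC]
      split_ifs at hcond with h1 h2 h3
      · -- a.val = 0, n = b.val + 1
        have hcast : (b.val : ZMod n) + 1 = 0 := by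
          have := congrArg (Nat.cast : ℕ → ZMod n) hcond.symm
          push_cast at this
          rw [this, ZMod.natCast_self]
        have hb2 : ¬ (b.val % 2 = 0) := by omega
        have ha2 : a.val % 2 = 0 := by omega
        rw [if_neg hb2, if_pos ha2, show a.val = 0 by omega]
        push_cast
        linear_combination -hcast
      · -- a.val + 1 = n, b.val = 0
        have hcast : (a.val : ZMod n) + 1 = 0 := by
          have := congrArg (Nat.cast : ℕ → ZMod n) h2
          push_cast at this
          rw [this, ZMod.natCast_self]
        have hb2 : b.val % 2 = 0 := by omega
        have ha2 : ¬ (a.val % 2 = 0) := by omega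
        rw [if_pos hb2, if_neg ha2, show b.val = 0 by omega]
        push_cast
        linear_combination -hcast
      · -- a odd, b.val = a.val + 1
        have hcast : (b.val : ZMod n) = (a.val : ZMod n) + 1 := by
          exact_mod_cast congrArg (Nat.cast : ℕ → ZMod n) (show b.val = a.val + 1 by omega)
        have hb2 : b.val % 2 = 0 := by omega
        have ha2 : ¬ (a.val % 2 = 0) := by omega
        rw [if_pos hb2, if_neg ha2, hcast]
        ring
      · -- a even (a ≠ 0, a+1 ≠ n), b.val + 1 = a.val
        have hcast : (b.val : ZMod n) + 1 = (a.val : ZMod n) := by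
          exact_mod_cast congrArg (Nat.cast : ℕ → ZMod n) (show b.val + 1 = a.val by omega)
        have hb2 : ¬ (b.val % 2 = 0) := by omega
        have ha2 : a.val % 2 = 0 := by omega
        rw [if_neg hb2, if_pos ha2]
        linear_combination -hcast
    have hQ2 : ∀ a b : Fin n, 0 < Q2mat n a b →
        C b = (i.val : ZMod n) + (j.val : ZMod n) - 1 - C a := by
      intro a b h
      have hcond := hq2 a b h
      have ha := a.isLt; have hb := b.isLt
      simp only [hC]
      split_ifs at hcond with h1
      · -- a odd, b.val + 1 = a.val
        have hcast : (b.val : ZMod n) + 1 = (a.val : ZMod n) := by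
          exact_mod_cast congrArg (Nat.cast : ℕ → ZMod n) (show b.val + 1 = a.val by omega)
        have hb2 : b.val % 2 = 0 := by omega
        have ha2 : ¬ (a.val % 2 = 0) := by omega
        rw [if_pos hb2, if_neg ha2]
        linear_combination hcast
      · -- a even, b.val = a.val + 1
        have hcast : (b.val : ZMod n) = (a.val : ZMod n) + 1 := by
          exact_mod_cast congrArg (Nat.cast : ℕ → ZMod n) (show b.val = a.val + 1 by omega)
        have hb2 : ¬ (b.val % 2 = 0) := by omega
        have ha2 : a.val % 2 = 0 := by omega
        rw [if_neg hb2, if_pos ha2, hcast]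
        ring
    have c0 : C ⟨0, by omega⟩ = ((0 : ℕ) : ZMod n) := by simp [hC]
    have c2 : C ⟨2, by omega⟩ = ((2 : ℕ) : ZMod n) := by simp [hC]
    refine key_not_primitive C
      ![id, fun u => (i.val : ZMod n) + (j.val : ZMod n) + 1 - u,
        fun u => (i.val : ZMod n) + (j.val : ZMod n) - 1 - u]
      ?_ ⟨0, by omega⟩ ⟨2, by omega⟩ ?_
    · intro ℓ a b h
      fin_cases ℓ
      · exact hA a b h
      · exact hQ1 a b h
      · exact hQ2 a b h
    · rw [c0, c2]
      intro hcon
      have h2 : ((2 : ℕ) : ZMod n).val = 2 := ZMod.val_cast_of_lt (by omega)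
      have h0 : ((0 : ℕ) : ZMod n).val = 0 := ZMod.val_cast_of_lt (by omega)
      rw [hcon] at h0
      omega
end
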